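/- arXiv:2402.15352 — 10 statements merged into one kernel-verified Lean document; each statement's English description precedes it below -/
import Mathlib

section
/- Let n, m be positive integers, and let f : ℝⁿ → ℝᵐ be any function. Fix real numbers s < t. For a vector y ∈ ℝⁿ that is not constant (i.e. max_i y_i > min_i y_i), define the normalization T_{s,t}(y) = (t−s)·(y − (min_i y_i)·𝟙ₙ)/(max_i y_i − min_i y_i) + s·𝟙ₙ, and define g(y) = ((max_i y_i − min_i y_i)/(t−s))·(f(T_{s,t}(y)) − s·𝟙ₘ) + (min_i y_i)·𝟙ₘ (i.e. g = T_{s,t}⁻¹ ∘ f ∘ T_{s,t}, where the inverse affine map is the one determined by y). Then g is normalization-equivariant on non-constant vectors: for every non-constant y ∈ ℝⁿ, every a > 0 and every b ∈ ℝ, one has g(a·y + b·𝟙ₙ) = a·g(y) + b·𝟙ₘ. -/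
open Finset

/-- The smallest coordinate of a vector `y ∈ ℝⁿ` (for `n > 0`). -/
noncomputable def vecMin {n : ℕ} (hn : 0 < n) (y : Fin n → ℝ) : ℝ :=
  Finset.univ.inf' ⟨⟨0, hn⟩, Finset.mem_univ _⟩ y

/-- The largest coordinate of a vector `y ∈ ℝⁿ` (for `n > 0`). -/
noncomputable def vecMax {n : ℕ} (hn : 0 < n) (y : Fin n → ℝ) : ℝ :=
  Finset.univ.sup' ⟨⟨0, hn⟩, Finset.mem_univ _⟩ y

lemma vecMin_affine {n : ℕ} (hn : 0 < n) (y : Fin n → ℝ) (a b : ℝ) (ha : 0 < a) :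
    vecMin hn (fun i => a * y i + b) = a * vecMin hn y + b := by
  unfold vecMin
  have := Finset.apply_inf'_eq_inf'_comp (α := ℝ) (γ := ℝ)
    (⟨⟨0, hn⟩, Finset.mem_univ _⟩ : (Finset.univ : Finset (Fin n)).Nonempty)
    (f := y) (fun x => a * x + b) ?_
  · exact this.symm
  · intro x y
    have hmono : Monotone fun x : ℝ => a * x + b := fun u v huv => by
      dsimp; nlinarith
    exact hmono.map_min

lemma vecMax_affine {n : ℕ} (hn : 0 < n) (y : Fin n → ℝ) (a b : ℝ) (ha : 0 < a) :
    vecMax hn (fun i => a * y i + b) = a * vecMax hn y + b := by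
  unfold vecMax
  have := Finset.comp_sup'_eq_sup'_comp (α := ℝ) (γ := ℝ)
    (⟨⟨0, hn⟩, Finset.mem_univ _⟩ : (Finset.univ : Finset (Fin n)).Nonempty)
    (f := y) (fun x => a * x + b) ?_
  · exact this.symm
  · intro x y
    have hmono : Monotone fun x : ℝ => a * x + b := fun u v huv => by
      dsimp; nlinarith
    exact hmono.map_max

/-- **Normalization before/after processing yields a normalization-equivariant map.**
For any `f : ℝⁿ → ℝᵐ` and `s < t`, the map `g = T_{s,t}⁻¹ ∘ f ∘ T_{s,t}`, where
`T_{s,t}` is the linear normalization of a (non-constant) vector to the range `[s, t]`,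
is normalization-equivariant on non-constant vectors. -/
theorem normalized_conjugate_is_normalization_equivariant
    {n m : ℕ} (hn : 0 < n) (hm : 0 < m)
    (f : (Fin n → ℝ) → Fin m → ℝ) (s t : ℝ) (hst : s < t)
    (T : (Fin n → ℝ) → Fin n → ℝ)
    (hT : ∀ (y : Fin n → ℝ) (i : Fin n),
      T y i = (t - s) * (y i - vecMin hn y) / (vecMax hn y - vecMin hn y) + s)
    (g : (Fin n → ℝ) → Fin m → ℝ)
    (hg : ∀ (y : Fin n → ℝ) (j : Fin m),
      g y j = (vecMax hn y - vecMin hn y) / (t - s) * (f (T y) j - s) + vecMin hn y) :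
    ∀ y : Fin n → ℝ, vecMin hn y < vecMax hn y →
      ∀ (a b : ℝ), 0 < a →
        g (fun i => a * y i + b) = fun j => a * g y j + b := by
  intro y hy a b ha
  have hmin := vecMin_affine hn y a b ha
  have hmax := vecMax_affine hn y a b ha
  have hT' : T (fun i => a * y i + b) = T y := by
    funext i
    rw [hT, hT, hmin, hmax]
    have hd : vecMax hn y - vecMin hn y ≠ 0 := by linarith
    have h1 : a * vecMax hn y + b - (a * vecMin hn y + b) = a * (vecMax hn y - vecMin hn y) := by
      ring
    have h2 : a * y i + b - (a * vecMin hn y + b) = a * (y i - vecMin hn y) := by ring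
    rw [h1, h2, mul_comm a (y i - vecMin hn y), mul_comm a (vecMax hn y - vecMin hn y),
      ← mul_assoc, mul_div_mul_right _ _ ha.ne']
  funext j
  rw [hg, hg, hT', hmin, hmax]
  have hd : t - s ≠ 0 := by linarith
  field_simp
  ring
end

section
/- Let W ∈ ℝ^{m×n} be a matrix and let f : ℝⁿ → ℝᵐ be the linear filter f(y) = W y. Then f is normalization-equivariant if and only if every row of W sums to 1, i.e. W 𝟙ₙ = 𝟙ₘ. -/
/-- **Normalization-equivariant linear filters are exactly those whose rows sum to one.**
The linear filter `f(y) = W y` is normalization-equivariant if and only if every row of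
`W` sums to `1`, i.e. `W 𝟙ₙ = 𝟙ₘ`. -/
theorem linear_filter_normalization_equivariant_iff_rows_sum_one
    {n m : ℕ} (W : Matrix (Fin m) (Fin n) ℝ) :
    (∀ (y : Fin n → ℝ) (a b : ℝ), 0 < a →
      W.mulVec (fun i => a * y i + b) = fun j => a * W.mulVec y j + b)
    ↔ W.mulVec (fun _ => 1) = fun _ => 1 := by
  constructor
  · intro h
    have := h (fun _ => 0) 1 1 one_pos
    funext j
    have hj := congrFun this j
    simp [Matrix.mulVec, dotProduct] at hj ⊢
    linarith [hj]
  · intro h y a b _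
    funext j
    have hj := congrFun h j
    simp [Matrix.mulVec, dotProduct, mul_add, mul_comm, Finset.sum_add_distrib,
      Finset.mul_sum, mul_left_comm] at hj ⊢
    rw [← Finset.mul_sum, hj, mul_one]
end

section
/- (Noise2Noise identity.) Let (Ω, 𝓕, P) be a probability space and let x, ε, ε̄ : Ω → ℝⁿ be random vectors such that ε̄ is independent of the pair (x, ε) and E[ε̄] = 0. Set y = x + ε and ȳ = x + ε̄. Let f : ℝⁿ → ℝⁿ be measurable with f(y), x, and ε̄ all square-integrable. Then E‖f(y) − ȳ‖₂² = E‖f(y) − x‖₂² + E‖ε̄‖₂². In particular, the Noise2Noise loss E‖f(y) − ȳ‖₂² differs from the supervised quadratic risk E‖f(y) − x‖₂² by a constant independent of f. -/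
open MeasureTheory ProbabilityTheory


private lemma integrable_mul_of_memL2 {Ω : Type*} [MeasurableSpace Ω] {P : Measure Ω}
    {g h : Ω → ℝ} (hg : MemLp g 2 P) (hh : MemLp h 2 P) :
    Integrable (fun ω => g ω * h ω) P := by
  have hpqr : (1 : ENNReal) / 1 = 1 / 2 + 1 / 2 := by
    rw [div_one, ENNReal.add_halves]
  have := memLp_one_iff_integrable.mp (MemLp.smul (φ := g) (f := h) hh hg (hpqr := ⟨by rw [inv_one, ENNReal.inv_two_add_inv_two]⟩))
  exact this

/-- **Noise2Noise identity.** If `ε̄` is independent of the pair `(x, ε)` and has zero mean,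
then for `y = x + ε`, `ȳ = x + ε̄` and any measurable `f` with `f(y)`, `x`, `ε̄`
square-integrable, the Noise2Noise loss `E‖f(y) − ȳ‖₂²` equals the supervised quadratic risk
`E‖f(y) − x‖₂²` plus the constant `E‖ε̄‖₂²`. -/
theorem noise2noise_identity {Ω : Type*} [MeasurableSpace Ω]
    (P : Measure Ω) [IsProbabilityMeasure P] {n : ℕ}
    (x ε εbar : Ω → Fin n → ℝ)
    (hx : Measurable x) (hε : Measurable ε) (hεbar : Measurable εbar)
    (hindep : IndepFun (fun ω => (x ω, ε ω)) εbar P)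
    (hmean : ∀ i, ∫ ω, εbar ω i ∂P = 0)
    (f : (Fin n → ℝ) → Fin n → ℝ) (hf : Measurable f)
    (hfy : ∀ i, MemLp (fun ω => f (x ω + ε ω) i) 2 P)
    (hxL2 : ∀ i, MemLp (fun ω => x ω i) 2 P)
    (hεbarL2 : ∀ i, MemLp (fun ω => εbar ω i) 2 P) :
    ∫ ω, ∑ i, (f (x ω + ε ω) i - (x ω + εbar ω) i) ^ 2 ∂P
      = (∫ ω, ∑ i, (f (x ω + ε ω) i - x ω i) ^ 2 ∂P)
        + ∫ ω, ∑ i, (εbar ω i) ^ 2 ∂P := by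
  -- G i = f(y) i - x i
  have hG : ∀ i, MemLp (fun ω => f (x ω + ε ω) i - x ω i) 2 P :=
    fun i => (hfy i).sub (hxL2 i)
  have hGsq : ∀ i, Integrable (fun ω => (f (x ω + ε ω) i - x ω i) ^ 2) P := by
    intro i
    simpa [pow_two] using integrable_mul_of_memL2 (hG i) (hG i)
  have hEsq : ∀ i, Integrable (fun ω => (εbar ω i) ^ 2) P := by
    intro i
    simpa [pow_two] using integrable_mul_of_memL2 (hεbarL2 i) (hεbarL2 i)
  have hGE : ∀ i, Integrable (fun ω => (f (x ω + ε ω) i - x ω i) * εbar ω i) P :=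
    fun i => integrable_mul_of_memL2 (hG i) (hεbarL2 i)
  have hGEzero : ∀ i, ∫ ω, (f (x ω + ε ω) i - x ω i) * εbar ω i ∂P = 0 := by
    intro i
    have hφ : Measurable (fun p : (Fin n → ℝ) × (Fin n → ℝ) => f (p.1 + p.2) i - p.1 i) :=
      ((measurable_pi_apply i).comp (hf.comp (measurable_fst.add measurable_snd))).sub
        ((measurable_pi_apply i).comp measurable_fst)
    have hψ : Measurable (fun v : Fin n → ℝ => v i) := measurable_pi_apply i
    have hind : IndepFun (fun ω => f (x ω + ε ω) i - x ω i) (fun ω => εbar ω i) P :=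
      hindep.comp hφ hψ
    have h2 := hind.integral_mul_eq_mul_integral (hG i).aestronglyMeasurable (hεbarL2 i).aestronglyMeasurable
    rw [hmean i, mul_zero] at h2
    exact h2
  have hTermInt : ∀ i, Integrable
      (fun ω => (f (x ω + ε ω) i - (x ω + εbar ω) i) ^ 2) P := by
    intro i
    have h : (fun ω => (f (x ω + ε ω) i - (x ω + εbar ω) i) ^ 2)
        = fun ω => (f (x ω + ε ω) i - x ω i) ^ 2
            - 2 * ((f (x ω + ε ω) i - x ω i) * εbar ω i) + (εbar ω i) ^ 2 := by
      funext ω; simp only [Pi.add_apply]; ring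
    rw [h]
    exact (((hGsq i).sub ((hGE i).const_mul 2)).add (hEsq i))
  rw [integral_finset_sum _ (fun i _ => hTermInt i),
    integral_finset_sum _ (fun i _ => hGsq i),
    integral_finset_sum _ (fun i _ => hEsq i), ← Finset.sum_add_distrib]
  refine Finset.sum_congr rfl fun i _ => ?_
  have h : (fun ω => (f (x ω + ε ω) i - (x ω + εbar ω) i) ^ 2)
      = fun ω => (f (x ω + ε ω) i - x ω i) ^ 2
          - 2 * ((f (x ω + ε ω) i - x ω i) * εbar ω i) + (εbar ω i) ^ 2 := by
    funext ω; simp only [Pi.add_apply]; ring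
  have hI1 : Integrable (fun ω => (f (x ω + ε ω) i - x ω i) ^ 2
      - 2 * ((f (x ω + ε ω) i - x ω i) * εbar ω i)) P :=
    (hGsq i).sub ((hGE i).const_mul 2)
  rw [h, integral_add hI1 (hEsq i),
    integral_sub (hGsq i) ((hGE i).const_mul 2), integral_const_mul, hGEzero i]
  ring
end

section
/- (Noise2Self identity for blind-spot functions.) Let (Ω, 𝓕, P) be a probability space, x : Ω → ℝⁿ a random vector, and ε : Ω → ℝⁿ a random vector independent of x whose n coordinates ε₁, …, εₙ are mutually independent with E[εᵢ] = 0 for every i. Set y = x + ε. Let f : ℝⁿ → ℝⁿ be a measurable blind-spot function, meaning that for each i the coordinate function f_i(y) depends only on the coordinates (y_j)_{j ≠ i}, i.e. f_i(y + t e_i) = f_i(y) for all y ∈ ℝⁿ and t ∈ ℝ. Assume f(y), x, and ε are square-integrable. Then E‖f(y) − y‖₂² = E‖f(y) − x‖₂² + E‖ε‖₂². In particular, the self-supervised loss E‖f(y) − y‖₂² differs from the supervised quadratic risk E‖f(y) − x‖₂² by a constant independent of f. -/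
open MeasureTheory ProbabilityTheory

lemma my_indepFun_prodMk {Ω α β γ : Type*} [MeasurableSpace Ω] [MeasurableSpace α]
    [MeasurableSpace β] [MeasurableSpace γ] {P : Measure Ω} [IsProbabilityMeasure P]
    {X : Ω → α} {Y : Ω → β} {Z : Ω → γ}
    (hX : Measurable X) (hY : Measurable Y) (hZ : Measurable Z)
    (h1 : IndepFun X (fun ω => (Y ω, Z ω)) P) (h2 : IndepFun Y Z P) :
    IndepFun (fun ω => (X ω, Y ω)) Z P := by
  haveI : IsProbabilityMeasure (P.map X) := Measure.isProbabilityMeasure_map hX.aemeasurable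
  haveI : IsProbabilityMeasure (P.map Y) := Measure.isProbabilityMeasure_map hY.aemeasurable
  haveI : IsProbabilityMeasure (P.map Z) := Measure.isProbabilityMeasure_map hZ.aemeasurable
  have hXY : IndepFun X Y P := h1.comp measurable_id measurable_fst
  rw [indepFun_iff_map_prod_eq_prod_map_map ((hX.prodMk hY).aemeasurable) hZ.aemeasurable]
  rw [indepFun_iff_map_prod_eq_prod_map_map hX.aemeasurable ((hY.prodMk hZ).aemeasurable)] at h1
  rw [indepFun_iff_map_prod_eq_prod_map_map hY.aemeasurable hZ.aemeasurable] at h2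
  rw [indepFun_iff_map_prod_eq_prod_map_map hX.aemeasurable hY.aemeasurable] at hXY
  have hcomp : (fun ω => ((X ω, Y ω), Z ω))
      = (MeasurableEquiv.prodAssoc.symm : α × β × γ ≃ᵐ (α × β) × γ) ∘ (fun ω => (X ω, (Y ω, Z ω))) := rfl
  rw [hcomp, ← Measure.map_map MeasurableEquiv.prodAssoc.symm.measurable
    (hX.prodMk (hY.prodMk hZ)), h1, h2, hXY, ← Measure.prodAssoc_prod,
    MeasurableEquiv.map_symm_map]

lemma my_integrable_mul {Ω : Type*} [MeasurableSpace Ω] {P : Measure Ω}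
    {f g : Ω → ℝ} (hf : MemLp f 2 P) (hg : MemLp g 2 P) :
    Integrable (fun ω => f ω * g ω) P := by
  refine Integrable.mono' ((hf.integrable_sq.add hg.integrable_sq).div_const 2)
    (hf.aestronglyMeasurable.mul hg.aestronglyMeasurable)
    (Filter.Eventually.of_forall fun ω => ?_)
  rw [Real.norm_eq_abs, abs_mul]
  simp only [Pi.add_apply]
  nlinarith [sq_nonneg (|f ω| - |g ω|), sq_abs (f ω), sq_abs (g ω)]

/-- **Noise2Self identity for blind-spot functions.**
Let `y = x + ε`, where `ε` is independent of `x`, has mutually independent coordinates, and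
each coordinate has zero mean. If `f` is a measurable blind-spot function (each coordinate
`f_i(y)` does not depend on `y_i`), and `f(y)`, `x`, `ε` are square-integrable, then the
self-supervised loss `E‖f(y) − y‖₂²` equals the supervised risk `E‖f(y) − x‖₂²` plus the
constant `E‖ε‖₂²`. -/
theorem noise2self_identity {Ω : Type*} [MeasurableSpace Ω]
    (P : Measure Ω) [IsProbabilityMeasure P] {n : ℕ}
    (x ε : Ω → Fin n → ℝ)
    (hx : Measurable x) (hε : Measurable ε)
    (hindep : IndepFun x ε P)
    (hcoord : iIndepFun (fun i ω => ε ω i) P)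
    (hmean : ∀ i, ∫ ω, ε ω i ∂P = 0)
    (f : (Fin n → ℝ) → Fin n → ℝ) (hf : Measurable f)
    (hblind : ∀ (i : Fin n) (v : Fin n → ℝ) (t : ℝ),
      f (v + t • (Pi.single i 1 : Fin n → ℝ)) i = f v i)
    (hfy : ∀ i, MemLp (fun ω => f (x ω + ε ω) i) 2 P)
    (hxL2 : ∀ i, MemLp (fun ω => x ω i) 2 P)
    (hεL2 : ∀ i, MemLp (fun ω => ε ω i) 2 P) :
    ∫ ω, ∑ i, (f (x ω + ε ω) i - (x ω + ε ω) i) ^ 2 ∂P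
      = (∫ ω, ∑ i, (f (x ω + ε ω) i - x ω i) ^ 2 ∂P)
        + ∫ ω, ∑ i, (ε ω i) ^ 2 ∂P := by
  classical
  -- per-coordinate key identity
  have key : ∀ i : Fin n,
      ∫ ω, (f (x ω + ε ω) i - (x ω i + ε ω i)) ^ 2 ∂P
        = (∫ ω, (f (x ω + ε ω) i - x ω i) ^ 2 ∂P) + ∫ ω, (ε ω i) ^ 2 ∂P := by
    intro i
    set F : Ω → ℝ := fun ω => f (x ω + ε ω) i with hF
    set X : Ω → ℝ := fun ω => x ω i with hX
    set E : Ω → ℝ := fun ω => ε ω i with hE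
    have hFX : MemLp (fun ω => F ω - X ω) 2 P := (hfy i).sub (hxL2 i)
    have int1 : Integrable (fun ω => (F ω - X ω) ^ 2) P := hFX.integrable_sq
    have int2 : Integrable (fun ω => (F ω - X ω) * E ω) P := my_integrable_mul hFX (hεL2 i)
    have int3 : Integrable (fun ω => E ω ^ 2) P := (hεL2 i).integrable_sq
    -- blind spot: f(x+ε) i = f(x + update ε i 0) i
    have hblind' : ∀ ω, f (x ω + ε ω) i = f (x ω + Function.update (ε ω) i 0) i := by
      intro ω
      have h := hblind i (x ω + Function.update (ε ω) i 0) (ε ω i)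
      have hv : (x ω + Function.update (ε ω) i 0) + (ε ω i) • (Pi.single i 1 : Fin n → ℝ)
          = x ω + ε ω := by
        funext j
        by_cases hj : j = i
        · subst hj; simp [Function.update_apply, Pi.single_apply]
        · simp [Function.update_apply, Pi.single_apply, hj]
      rw [hv] at h
      exact h
    -- independence of (x, update ε i 0) and ε_i
    have hYmeas : Measurable (fun ω => Function.update (ε ω) i 0) := by
      apply measurable_pi_lambda
      intro j
      by_cases hj : j = i
      · subst hj; simp only [Function.update_apply, if_pos rfl]; exact measurable_const
      · simp only [Function.update_apply, if_neg hj]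
        exact (measurable_pi_apply j).comp hε
    have hZmeas : Measurable (fun ω => ε ω i) := (measurable_pi_apply i).comp hε
    have hYZ : IndepFun (fun ω => Function.update (ε ω) i 0) (fun ω => ε ω i) P := by
      have hd : Disjoint (Finset.univ.erase i) ({i} : Finset (Fin n)) := by simp
      have h := hcoord.indepFun_finset (Finset.univ.erase i) {i} hd
        (fun j => (measurable_pi_apply j).comp hε)
      set φ : (↥(Finset.univ.erase i) → ℝ) → (Fin n → ℝ) :=
        fun v j => if h : j ∈ Finset.univ.erase i then v ⟨j, h⟩ else 0 with hφdef
      have hφ : Measurable φ := by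
        apply measurable_pi_lambda
        intro j
        by_cases hj : j ∈ Finset.univ.erase i
        · simp only [hφdef, dif_pos hj]; exact measurable_pi_apply _
        · simp only [hφdef, dif_neg hj]; exact measurable_const
      set ψ : (↥({i} : Finset (Fin n)) → ℝ) → ℝ := fun v => v ⟨i, Finset.mem_singleton_self i⟩
      have hψ : Measurable ψ := measurable_pi_apply _
      have h2 := h.comp hφ hψ
      have heq1 : (φ ∘ fun a (j : ↥(Finset.univ.erase i)) => ε a j)
          = fun ω => Function.update (ε ω) i 0 := by
        funext ω
        funext j
        by_cases hj : j = i
        · subst hj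
          simp [hφdef, Function.comp, Function.update_apply]
        · have hj' : j ∈ Finset.univ.erase i := by simp [hj]
          simp [hφdef, Function.comp, Function.update_apply, hj, hj']
      have heq2 : (ψ ∘ fun a (j : ↥({i} : Finset (Fin n))) => ε a j) = fun ω => ε ω i := rfl
      rwa [heq1, heq2] at h2
    have hXYZ : IndepFun x (fun ω => (Function.update (ε ω) i 0, ε ω i)) P := by
      have hm : Measurable (fun b : Fin n → ℝ => (Function.update b i 0, b i)) := by
        refine Measurable.prodMk ?_ (measurable_pi_apply i)
        apply measurable_pi_lambda
        intro j
        by_cases hj : j = i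
        · subst hj; simp only [Function.update_apply, if_pos rfl]; exact measurable_const
        · simp only [Function.update_apply, if_neg hj]; exact measurable_pi_apply j
      exact hindep.comp measurable_id hm
    have hWZ : IndepFun (fun ω => (x ω, Function.update (ε ω) i 0)) (fun ω => ε ω i) P :=
      my_indepFun_prodMk hx hYmeas hZmeas hXYZ hYZ
    -- cross term zero
    have hg : Measurable (fun p : (Fin n → ℝ) × (Fin n → ℝ) => f (p.1 + p.2) i - p.1 i) := by
      apply Measurable.sub
      · exact (measurable_pi_apply i).comp (hf.comp (measurable_fst.add measurable_snd))
      · exact (measurable_pi_apply i).comp measurable_fst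
    have hGZ : IndepFun (fun ω => F ω - X ω) (fun ω => ε ω i) P := by
      have h := hWZ.comp hg measurable_id
      have heq : ((fun p : (Fin n → ℝ) × (Fin n → ℝ) => f (p.1 + p.2) i - p.1 i)
          ∘ fun ω => (x ω, Function.update (ε ω) i 0)) = fun ω => F ω - X ω := by
        funext ω
        simp only [Function.comp, hF, hX]
        rw [← hblind' ω]
      rwa [heq] at h
    have cross : ∫ ω, (F ω - X ω) * E ω ∂P = 0 := by
      rw [hGZ.integral_fun_mul_eq_mul_integral hFX.aestronglyMeasurable (hεL2 i).aestronglyMeasurable]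
      simp [hE, hmean i]
    have hpt : ∀ ω, (F ω - (X ω + E ω)) ^ 2
        = (F ω - X ω) ^ 2 - 2 * ((F ω - X ω) * E ω) + E ω ^ 2 := fun ω => by ring
    calc ∫ ω, (F ω - (X ω + E ω)) ^ 2 ∂P
        = ∫ ω, ((F ω - X ω) ^ 2 - 2 * ((F ω - X ω) * E ω) + E ω ^ 2) ∂P := by
          exact integral_congr_ae (Filter.Eventually.of_forall fun ω => hpt ω)
      _ = (∫ ω, ((F ω - X ω) ^ 2 - 2 * ((F ω - X ω) * E ω)) ∂P) + ∫ ω, E ω ^ 2 ∂P :=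
          integral_add (int1.sub (int2.const_mul 2)) int3
      _ = (∫ ω, (F ω - X ω) ^ 2 ∂P) - (∫ ω, 2 * ((F ω - X ω) * E ω) ∂P) + ∫ ω, E ω ^ 2 ∂P := by
          rw [integral_sub int1 (int2.const_mul 2)]
      _ = (∫ ω, (F ω - X ω) ^ 2 ∂P) + ∫ ω, E ω ^ 2 ∂P := by
          rw [integral_const_mul, cross, mul_zero, sub_zero]
  -- integrability of summands
  have intA : ∀ i : Fin n, Integrable (fun ω => (f (x ω + ε ω) i - (x ω + ε ω) i) ^ 2) P :=
    fun i => ((hfy i).sub ((hxL2 i).add (hεL2 i))).integrable_sq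
  have intB : ∀ i : Fin n, Integrable (fun ω => (f (x ω + ε ω) i - x ω i) ^ 2) P :=
    fun i => ((hfy i).sub (hxL2 i)).integrable_sq
  have intC : ∀ i : Fin n, Integrable (fun ω => (ε ω i) ^ 2) P :=
    fun i => (hεL2 i).integrable_sq
  rw [integral_finset_sum _ (fun i _ => intA i), integral_finset_sum _ (fun i _ => intB i),
    integral_finset_sum _ (fun i _ => intC i), ← Finset.sum_add_distrib]
  exact Finset.sum_congr rfl fun i _ => key i
end

section
/- (Recorrupted-to-Recorrupted decorrelation.) Let σ > 0 and α ≠ 0 be real numbers, and let ε, ε′ : Ω → ℝⁿ be independent random vectors, each having n mutually independent coordinates distributed as N(0, σ²). Define η₁ = ε + α ε′ and η₂ = ε − ε′/α. Then η₁ and η₂ are independent random vectors; moreover every coordinate of η₁ has distribution N(0, (1+α²)σ²) and every coordinate of η₂ has distribution N(0, (1 + 1/α²)σ²). -/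
open MeasureTheory ProbabilityTheory Set ENNReal Real

namespace R2RAux

noncomputable def Tlin (α : ℝ) : (ℝ × ℝ) →ₗ[ℝ] (ℝ × ℝ) where
  toFun p := (p.1 + α * p.2, p.1 - p.2 / α)
  map_add' p q := by
    simp only [Prod.fst_add, Prod.snd_add, Prod.mk_add_mk, Prod.mk.injEq]
    constructor <;> ring
  map_smul' c p := by
    simp only [Prod.smul_fst, Prod.smul_snd, smul_eq_mul, Prod.smul_mk, RingHom.id_apply,
      Prod.mk.injEq]
    constructor <;> ring

lemma det_Tlin (α : ℝ) : LinearMap.det (Tlin α) = -(α + 1/α) := by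
  rw [← LinearMap.det_toMatrix (Module.Basis.finTwoProd ℝ), Matrix.det_fin_two]
  simp [LinearMap.toMatrix_apply, Tlin, Module.Basis.coe_finTwoProd_repr, Module.Basis.finTwoProd_zero,
    Module.Basis.finTwoProd_one]
  ring

noncomputable def Teq (α : ℝ) (hα : α ≠ 0) : (ℝ × ℝ) ≃ᵐ (ℝ × ℝ) where
  toFun p := (p.1 + α * p.2, p.1 - p.2 / α)
  invFun p := ((p.1 + α ^ 2 * p.2) / (α ^ 2 + 1), α * (p.1 - p.2) / (α ^ 2 + 1))
  left_inv p := by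
    have h : α ^ 2 + 1 ≠ 0 := by positivity
    have := hα
    refine Prod.ext ?_ ?_ <;> (simp only []; field_simp; ring)
  right_inv p := by
    have h : α ^ 2 + 1 ≠ 0 := by positivity
    have := hα
    refine Prod.ext ?_ ?_ <;> (simp only []; field_simp; ring)
  measurable_toFun := by dsimp; fun_prop
  measurable_invFun := by dsimp; fun_prop
lemma map_withDensity_equiv {β γ : Type*} [MeasurableSpace β] [MeasurableSpace γ]
    (μ : Measure β) (e : β ≃ᵐ γ) {f : β → ℝ≥0∞} (hf : Measurable f) :
    (μ.withDensity f).map e = (μ.map e).withDensity (fun y => f (e.symm y)) := by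
  ext s hs
  rw [MeasurableEquiv.map_apply, withDensity_apply _ (e.measurable hs),
    withDensity_apply _ hs,
    setLIntegral_map (f := fun y => f (e.symm y)) hs (hf.comp e.symm.measurable) e.measurable]
  simp

lemma prod_withDensity {β γ : Type*} [MeasurableSpace β] [MeasurableSpace γ]
    (μ : Measure β) (ν : Measure γ) [SigmaFinite μ] [SigmaFinite ν]
    {f : β → ℝ≥0∞} {g : γ → ℝ≥0∞} (hf : Measurable f) (hg : Measurable g)
    [SigmaFinite (μ.withDensity f)] [SigmaFinite (ν.withDensity g)] :
    (μ.withDensity f).prod (ν.withDensity g)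
      = (μ.prod ν).withDensity (fun p => f p.1 * g p.2) := by
  refine Measure.prod_eq fun s t hs ht => ?_
  rw [withDensity_apply _ (hs.prod ht), ← Measure.prod_restrict,
    lintegral_prod_mul hf.aemeasurable hg.aemeasurable,
    withDensity_apply _ hs, withDensity_apply _ ht]

lemma real_id {σ α : ℝ} (u w : ℝ) (hσ : 0 < σ) (hα : α ≠ 0) :
    |(-(α + 1 / α))⁻¹| * (gaussianPDFReal 0 (σ ^ 2).toNNReal ((u + α ^ 2 * w) / (α ^ 2 + 1)) *
        gaussianPDFReal 0 (σ ^ 2).toNNReal (α * (u - w) / (α ^ 2 + 1)))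
      = gaussianPDFReal 0 ((1 + α ^ 2) * σ ^ 2).toNNReal u *
          gaussianPDFReal 0 ((1 + 1 / α ^ 2) * σ ^ 2).toNNReal w := by
  have hσ2 : (0:ℝ) ≤ σ ^ 2 := by positivity
  have h1 : (0:ℝ) ≤ (1 + α ^ 2) * σ ^ 2 := by positivity
  have h2 : (0:ℝ) ≤ (1 + 1 / α ^ 2) * σ ^ 2 := by positivity
  simp only [gaussianPDFReal, Real.coe_toNNReal _ hσ2, Real.coe_toNNReal _ h1,
    Real.coe_toNNReal _ h2, sub_zero]
  set x : ℝ := (u + α ^ 2 * w) / (α ^ 2 + 1) with hx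
  set y : ℝ := α * (u - w) / (α ^ 2 + 1) with hy
  have hA : α ^ 2 + 1 ≠ 0 := by positivity
  have hexp : Real.exp (-x ^ 2 / (2 * σ ^ 2)) * Real.exp (-y ^ 2 / (2 * σ ^ 2))
      = Real.exp (-u ^ 2 / (2 * ((1 + α ^ 2) * σ ^ 2))) *
          Real.exp (-w ^ 2 / (2 * ((1 + 1 / α ^ 2) * σ ^ 2))) := by
    rw [← Real.exp_add, ← Real.exp_add]
    congr 1
    rw [hx, hy]
    field_simp
    ring
  have hs : Real.sqrt (2 * π * σ ^ 2) * Real.sqrt (2 * π * σ ^ 2) = 2 * π * σ ^ 2 :=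
    Real.mul_self_sqrt (by positivity)
  have hs2 : Real.sqrt (2 * π * ((1 + α ^ 2) * σ ^ 2)) *
      Real.sqrt (2 * π * ((1 + 1 / α ^ 2) * σ ^ 2)) = 2 * π * σ ^ 2 * |α + 1 / α| := by
    rw [← Real.sqrt_mul (by positivity),
      show 2 * π * ((1 + α ^ 2) * σ ^ 2) * (2 * π * ((1 + 1 / α ^ 2) * σ ^ 2))
        = (2 * π * σ ^ 2 * (α + 1 / α)) ^ 2 by field_simp; ring,
      Real.sqrt_sq_eq_abs, abs_mul, abs_of_nonneg (by positivity)]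
  have hconst : (Real.sqrt (2 * π * ((1 + α ^ 2) * σ ^ 2)))⁻¹ *
      (Real.sqrt (2 * π * ((1 + 1 / α ^ 2) * σ ^ 2)))⁻¹
      = |(-(α + 1 / α))⁻¹| * ((Real.sqrt (2 * π * σ ^ 2))⁻¹ * (Real.sqrt (2 * π * σ ^ 2))⁻¹) := by
    rw [← mul_inv, hs2, ← mul_inv, hs, abs_inv, abs_neg, mul_inv]
    ring
  calc |(-(α + 1 / α))⁻¹| * ((Real.sqrt (2 * π * σ ^ 2))⁻¹ * Real.exp (-x ^ 2 / (2 * σ ^ 2)) *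
        ((Real.sqrt (2 * π * σ ^ 2))⁻¹ * Real.exp (-y ^ 2 / (2 * σ ^ 2))))
      = (|(-(α + 1 / α))⁻¹| * ((Real.sqrt (2 * π * σ ^ 2))⁻¹ * (Real.sqrt (2 * π * σ ^ 2))⁻¹)) *
          (Real.exp (-x ^ 2 / (2 * σ ^ 2)) * Real.exp (-y ^ 2 / (2 * σ ^ 2))) := by ring
    _ = _ := by rw [← hconst, hexp]; ring

lemma core {σ α : ℝ} (hσ : 0 < σ) (hα : α ≠ 0) :
    ((gaussianReal 0 (σ ^ 2).toNNReal).prod (gaussianReal 0 (σ ^ 2).toNNReal)).map (Teq α hα)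
      = (gaussianReal 0 ((1 + α ^ 2) * σ ^ 2).toNNReal).prod
          (gaussianReal 0 ((1 + 1 / α ^ 2) * σ ^ 2).toNNReal) := by
  have hv : (σ ^ 2).toNNReal ≠ 0 := by
    simp only [ne_eq, Real.toNNReal_eq_zero, not_le]; positivity
  have hv1 : ((1 + α ^ 2) * σ ^ 2).toNNReal ≠ 0 := by
    simp only [ne_eq, Real.toNNReal_eq_zero, not_le]; positivity
  have hv2 : ((1 + 1 / α ^ 2) * σ ^ 2).toNNReal ≠ 0 := by
    simp only [ne_eq, Real.toNNReal_eq_zero, not_le]; positivity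
  have hsum : α + 1 / α ≠ 0 := by
    have : α + 1 / α = (α ^ 2 + 1) / α := by field_simp
    rw [this]
    exact div_ne_zero (by positivity) hα
  have hdet : LinearMap.det (Tlin α) ≠ 0 := by
    rw [det_Tlin]; exact neg_ne_zero.mpr hsum
  haveI : (volume : Measure (ℝ × ℝ)).IsAddHaarMeasure := by
    rw [Measure.volume_eq_prod]
    infer_instance
  haveI h1 : SigmaFinite (volume.withDensity (gaussianPDF 0 (σ ^ 2).toNNReal)) := by
    rw [← gaussianReal_of_var_ne_zero 0 hv]; infer_instance
  haveI h2 : SigmaFinite (volume.withDensity (gaussianPDF 0 ((1 + α ^ 2) * σ ^ 2).toNNReal)) := by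
    rw [← gaussianReal_of_var_ne_zero 0 hv1]; infer_instance
  haveI h3 : SigmaFinite
      (volume.withDensity (gaussianPDF 0 ((1 + 1 / α ^ 2) * σ ^ 2).toNNReal)) := by
    rw [← gaussianReal_of_var_ne_zero 0 hv2]; infer_instance
  rw [gaussianReal_of_var_ne_zero 0 hv, gaussianReal_of_var_ne_zero 0 hv1,
    gaussianReal_of_var_ne_zero 0 hv2,
    prod_withDensity volume volume (measurable_gaussianPDF _ _) (measurable_gaussianPDF _ _),
    prod_withDensity volume volume (measurable_gaussianPDF _ _) (measurable_gaussianPDF _ _),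
    ← Measure.volume_eq_prod,
    map_withDensity_equiv (f := fun p : ℝ × ℝ =>
        gaussianPDF 0 (σ ^ 2).toNNReal p.1 * gaussianPDF 0 (σ ^ 2).toNNReal p.2)
      volume (Teq α hα)
      (((measurable_gaussianPDF _ _).comp measurable_fst).mul
        ((measurable_gaussianPDF _ _).comp measurable_snd))]
  have hmapvol : volume.map (Teq α hα) = ENNReal.ofReal |(LinearMap.det (Tlin α))⁻¹| • volume := by
    have : (⇑(Teq α hα) : ℝ × ℝ → ℝ × ℝ) = ⇑(Tlin α) := rfl
    rw [this]
    exact Measure.map_linearMap_addHaar_eq_smul_addHaar volume hdet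
  rw [hmapvol, withDensity_smul_measure, ← withDensity_smul' _ _ ENNReal.ofReal_ne_top]
  refine congrArg _ (funext fun p => ?_)
  simp only [Pi.smul_apply, smul_eq_mul, det_Tlin, gaussianPDF, Teq, MeasurableEquiv.symm_mk,
    MeasurableEquiv.coe_mk, Equiv.coe_fn_symm_mk]
  rw [← ENNReal.ofReal_mul (gaussianPDFReal_nonneg _ _ _),
    ← ENNReal.ofReal_mul (abs_nonneg _),
    ← ENNReal.ofReal_mul (gaussianPDFReal_nonneg _ _ _)]
  exact congrArg ENNReal.ofReal (real_id p.1 p.2 hσ hα)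

lemma map_eq_pi {Ω : Type*} [MeasurableSpace Ω] (P : Measure Ω) [IsProbabilityMeasure P]
    {n : ℕ} (f : Ω → Fin n → ℝ) (hf : Measurable f)
    (hcoord : iIndepFun (fun i ω => f ω i) P)
    (μ : Fin n → Measure ℝ) [∀ i, IsProbabilityMeasure (μ i)]
    (hμ : ∀ i, P.map (fun ω => f ω i) = μ i) :
    P.map f = Measure.pi μ := by
  refine (Measure.pi_eq fun s hs => ?_).symm
  rw [Measure.map_apply hf (MeasurableSet.univ_pi hs)]
  have hpre : f ⁻¹' (Set.pi Set.univ s) = ⋂ i ∈ Finset.univ, (fun ω => f ω i) ⁻¹' s i := by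
    ext ω; simp [Set.mem_pi]
  rw [hpre, hcoord.measure_inter_preimage_eq_mul Finset.univ (fun i _ => hs i)]
  exact Finset.prod_congr rfl fun i _ => by
    rw [← hμ i, Measure.map_apply hf.eval (hs i)]

lemma map_pi_pair {n : ℕ} {σ α : ℝ} (hσ : 0 < σ) (hα : α ≠ 0) :
    ((Measure.pi fun _ : Fin n => gaussianReal 0 (σ ^ 2).toNNReal).prod
        (Measure.pi fun _ : Fin n => gaussianReal 0 (σ ^ 2).toNNReal)).map
        (fun q : (Fin n → ℝ) × (Fin n → ℝ) => (q.1 + α • q.2, q.1 - α⁻¹ • q.2))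
      = (Measure.pi fun _ : Fin n => gaussianReal 0 ((1 + α ^ 2) * σ ^ 2).toNNReal).prod
          (Measure.pi fun _ : Fin n => gaussianReal 0 ((1 + 1 / α ^ 2) * σ ^ 2).toNNReal) := by
  set e := MeasurableEquiv.arrowProdEquivProdArrow ℝ ℝ (Fin n) with he
  have h1 := (measurePreserving_arrowProdEquivProdArrow ℝ ℝ (Fin n)
    (fun _ => gaussianReal 0 (σ ^ 2).toNNReal)
    (fun _ => gaussianReal 0 (σ ^ 2).toNNReal)).map_eq
  have h3 := (measurePreserving_arrowProdEquivProdArrow ℝ ℝ (Fin n)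
    (fun _ => gaussianReal 0 ((1 + α ^ 2) * σ ^ 2).toNNReal)
    (fun _ => gaussianReal 0 ((1 + 1 / α ^ 2) * σ ^ 2).toNNReal)).map_eq
  have h2 := (measurePreserving_pi
    (fun _ : Fin n => (gaussianReal 0 (σ ^ 2).toNNReal).prod (gaussianReal 0 (σ ^ 2).toNNReal))
    (fun _ : Fin n => (gaussianReal 0 ((1 + α ^ 2) * σ ^ 2).toNNReal).prod
      (gaussianReal 0 ((1 + 1 / α ^ 2) * σ ^ 2).toNNReal))
    (f := fun _ => Teq α hα) (fun _ => ⟨(Teq α hα).measurable, core hσ hα⟩)).map_eq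
  have hΦ : Measurable (fun q : (Fin n → ℝ) × (Fin n → ℝ) =>
      (q.1 + α • q.2, q.1 - α⁻¹ • q.2)) := by fun_prop
  have hT : Measurable (fun (g : Fin n → ℝ × ℝ) i => Teq α hα (g i)) :=
    measurable_pi_lambda _ fun i => (Teq α hα).measurable.comp (measurable_pi_apply i)
  rw [← h1, Measure.map_map hΦ e.measurable]
  have hcomp : (fun q : (Fin n → ℝ) × (Fin n → ℝ) => (q.1 + α • q.2, q.1 - α⁻¹ • q.2)) ∘ ⇑e
      = ⇑e ∘ (fun (g : Fin n → ℝ × ℝ) i => Teq α hα (g i)) := by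
    funext g
    refine Prod.ext ?_ ?_ <;> funext i <;>
      simp [he, Teq, MeasurableEquiv.arrowProdEquivProdArrow, Equiv.arrowProdEquivProdArrow,
        div_eq_mul_inv, mul_comm]
  rw [hcomp, ← Measure.map_map e.measurable hT, h2, h3]

end R2RAux

open R2RAux

/-- **Recorrupted-to-Recorrupted decorrelation.**
Let `ε, ε′` be independent random vectors, each with `n` mutually independent `N(0, σ²)`
coordinates. Then `η₁ = ε + α ε′` and `η₂ = ε − ε′/α` are independent; moreover every
coordinate of `η₁` is `N(0, (1+α²)σ²)`-distributed and every coordinate of `η₂` is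
`N(0, (1+1/α²)σ²)`-distributed. -/
theorem r2r_decorrelation {Ω : Type*} [MeasurableSpace Ω]
    (P : Measure Ω) [IsProbabilityMeasure P] {n : ℕ}
    (σ α : ℝ) (hσ : 0 < σ) (hα : α ≠ 0)
    (ε ε' : Ω → Fin n → ℝ)
    (hε : Measurable ε) (hε' : Measurable ε')
    (hindep : IndepFun ε ε' P)
    (hεcoord : iIndepFun (fun i ω => ε ω i) P)
    (hε'coord : iIndepFun (fun i ω => ε' ω i) P)
    (hεgauss : ∀ i, P.map (fun ω => ε ω i) = gaussianReal 0 (σ ^ 2).toNNReal)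
    (hε'gauss : ∀ i, P.map (fun ω => ε' ω i) = gaussianReal 0 (σ ^ 2).toNNReal) :
    IndepFun (fun ω => ε ω + α • ε' ω) (fun ω => ε ω - α⁻¹ • ε' ω) P ∧
    (∀ i, P.map (fun ω => ε ω i + α * ε' ω i)
        = gaussianReal 0 (((1 + α ^ 2) * σ ^ 2).toNNReal)) ∧
    (∀ i, P.map (fun ω => ε ω i - ε' ω i / α)
        = gaussianReal 0 (((1 + 1 / α ^ 2) * σ ^ 2).toNNReal)) := by
  have hεi : ∀ i : Fin n, Measurable fun ω => ε ω i := fun i => hε.eval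
  have hε'i : ∀ i : Fin n, Measurable fun ω => ε' ω i := fun i => hε'.eval
  have hpair : ∀ i : Fin n, P.map (fun ω => (ε ω i, ε' ω i))
      = (gaussianReal 0 (σ ^ 2).toNNReal).prod (gaussianReal 0 (σ ^ 2).toNNReal) := by
    intro i
    have hi : IndepFun (fun ω => ε ω i) (fun ω => ε' ω i) P :=
      hindep.comp (measurable_pi_apply i) (measurable_pi_apply i)
    have h := (indepFun_iff_map_prod_eq_prod_map_map (hεi i).aemeasurable
      (hε'i i).aemeasurable).1 hi
    rwa [hεgauss i, hε'gauss i] at h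
  refine ⟨?_, ?_, ?_⟩
  · have hmapε : P.map ε = Measure.pi (fun _ : Fin n => gaussianReal 0 (σ ^ 2).toNNReal) :=
      map_eq_pi P ε hε hεcoord _ hεgauss
    have hmapε' : P.map ε' = Measure.pi (fun _ : Fin n => gaussianReal 0 (σ ^ 2).toNNReal) :=
      map_eq_pi P ε' hε' hε'coord _ hε'gauss
    have hjoint : P.map (fun ω => (ε ω, ε' ω))
        = (Measure.pi fun _ : Fin n => gaussianReal 0 (σ ^ 2).toNNReal).prod
            (Measure.pi fun _ : Fin n => gaussianReal 0 (σ ^ 2).toNNReal) := by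
      have h := (indepFun_iff_map_prod_eq_prod_map_map hε.aemeasurable hε'.aemeasurable).1 hindep
      rwa [hmapε, hmapε'] at h
    have hΦ : Measurable (fun q : (Fin n → ℝ) × (Fin n → ℝ) =>
        (q.1 + α • q.2, q.1 - α⁻¹ • q.2)) := by fun_prop
    have hη1 : Measurable (fun ω => ε ω + α • ε' ω) := by fun_prop
    have hη2 : Measurable (fun ω => ε ω - α⁻¹ • ε' ω) := by fun_prop
    have hη : P.map (fun ω => (ε ω + α • ε' ω, ε ω - α⁻¹ • ε' ω))
        = (Measure.pi fun _ : Fin n => gaussianReal 0 ((1 + α ^ 2) * σ ^ 2).toNNReal).prod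
            (Measure.pi fun _ : Fin n => gaussianReal 0 ((1 + 1 / α ^ 2) * σ ^ 2).toNNReal) := by
      have hco : (fun ω => (ε ω + α • ε' ω, ε ω - α⁻¹ • ε' ω))
          = (fun q : (Fin n → ℝ) × (Fin n → ℝ) => (q.1 + α • q.2, q.1 - α⁻¹ • q.2)) ∘
              (fun ω => (ε ω, ε' ω)) := rfl
      rw [hco, ← Measure.map_map hΦ (hε.prodMk hε'), hjoint, map_pi_pair hσ hα]
    have hm1 : P.map (fun ω => ε ω + α • ε' ω)
        = Measure.pi fun _ : Fin n => gaussianReal 0 ((1 + α ^ 2) * σ ^ 2).toNNReal := by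
      have hco : (fun ω => ε ω + α • ε' ω)
          = Prod.fst ∘ (fun ω => (ε ω + α • ε' ω, ε ω - α⁻¹ • ε' ω)) := rfl
      rw [hco, ← Measure.map_map measurable_fst (hη1.prodMk hη2), hη, Measure.map_fst_prod]
      simp
    have hm2 : P.map (fun ω => ε ω - α⁻¹ • ε' ω)
        = Measure.pi fun _ : Fin n => gaussianReal 0 ((1 + 1 / α ^ 2) * σ ^ 2).toNNReal := by
      have hco : (fun ω => ε ω - α⁻¹ • ε' ω)
          = Prod.snd ∘ (fun ω => (ε ω + α • ε' ω, ε ω - α⁻¹ • ε' ω)) := rfl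
      rw [hco, ← Measure.map_map measurable_snd (hη1.prodMk hη2), hη, Measure.map_snd_prod]
      simp
    exact (indepFun_iff_map_prod_eq_prod_map_map hη1.aemeasurable hη2.aemeasurable).2
      (by rw [hη, hm1, hm2])
  · intro i
    have hco : (fun ω => ε ω i + α * ε' ω i)
        = (Prod.fst ∘ ⇑(Teq α hα)) ∘ (fun ω => (ε ω i, ε' ω i)) := rfl
    rw [hco, ← Measure.map_map (measurable_fst.comp (Teq α hα).measurable)
      ((hεi i).prodMk (hε'i i)), hpair i,
      ← Measure.map_map measurable_fst (Teq α hα).measurable, core hσ hα, Measure.map_fst_prod]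
    simp
  · intro i
    have hco : (fun ω => ε ω i - ε' ω i / α)
        = (Prod.snd ∘ ⇑(Teq α hα)) ∘ (fun ω => (ε ω i, ε' ω i)) := rfl
    rw [hco, ← Measure.map_map (measurable_snd.comp (Teq α hα).measurable)
      ((hεi i).prodMk (hε'i i)), hpair i,
      ← Measure.map_map measurable_snd (Teq α hα).measurable, core hσ hα, Measure.map_snd_prod]
    simp
end

section
/- (Recorrupted-to-Recorrupted loss identity.) Let σ > 0 and α ≠ 0. Let x : Ω → ℝⁿ be a square-integrable random vector, and let ε, ε′ : Ω → ℝⁿ be independent of each other and of x, each with n mutually independent N(0, σ²) coordinates. Set z = x + ε + α ε′ and z̄ = x + ε − ε′/α. Then for every measurable f : ℝⁿ → ℝⁿ with f(z) square-integrable, E‖f(z) − z̄‖₂² = E‖f(z) − x‖₂² + n(1 + 1/α²)σ². In particular, minimizing the R2R loss E‖f(z) − z̄‖₂² is equivalent to minimizing the risk E‖f(z) − x‖₂² on the recorrupted input z. -/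
open MeasureTheory ProbabilityTheory Real
open scoped NNReal ENNReal

section GaussAux
variable {v : ℝ≥0}

lemma r2r_gaussianReal_withDensity (hv : v ≠ 0) :
    gaussianReal 0 v = volume.withDensity
      (fun x => ((gaussianPDFReal 0 v x).toNNReal : ℝ≥0∞)) := by
  rw [gaussianReal_of_var_ne_zero 0 hv]; rfl

lemma r2r_integral_gaussianReal (hv : v ≠ 0) (g : ℝ → ℝ) :
    ∫ x, g x ∂(gaussianReal 0 v) = ∫ x, gaussianPDFReal 0 v x * g x := by
  rw [r2r_gaussianReal_withDensity hv,
    integral_withDensity_eq_integral_smul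
      (f := fun x => (gaussianPDFReal 0 v x).toNNReal)
      ((measurable_gaussianPDFReal 0 v).real_toNNReal) g]
  congr 1; funext x
  simp [NNReal.smul_def, Real.coe_toNNReal _ (gaussianPDFReal_nonneg 0 v x)]

lemma r2r_integrable_gaussianReal_iff (hv : v ≠ 0) (g : ℝ → ℝ) :
    Integrable g (gaussianReal 0 v) ↔
      Integrable (fun x => gaussianPDFReal 0 v x * g x) volume := by
  rw [r2r_gaussianReal_withDensity hv,
    integrable_withDensity_iff_integrable_smul
      (f := fun x => (gaussianPDFReal 0 v x).toNNReal)
      ((measurable_gaussianPDFReal 0 v).real_toNNReal)]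
  refine integrable_congr (Filter.Eventually.of_forall fun x => ?_)
  simp [NNReal.smul_def, Real.coe_toNNReal _ (gaussianPDFReal_nonneg 0 v x)]

lemma r2r_gaussianPDFReal_eq :
    gaussianPDFReal 0 v = fun x => (√(2 * π * v))⁻¹ * rexp (-(2 * (v:ℝ))⁻¹ * x ^ 2) := by
  funext x
  rw [gaussianPDFReal]
  congr 1
  rw [sub_zero]
  ring

lemma r2r_vpos (hv : v ≠ 0) : (0:ℝ) < v := by
  exact_mod_cast pos_iff_ne_zero.mpr hv

lemma r2r_integrable_sq_gaussianReal (hv : v ≠ 0) :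
    Integrable (fun x : ℝ => x ^ 2) (gaussianReal 0 v) := by
  have hb : (0:ℝ) < (2 * (v:ℝ))⁻¹ := by
    have := r2r_vpos hv; positivity
  rw [r2r_integrable_gaussianReal_iff hv, r2r_gaussianPDFReal_eq]
  have h := (integrable_rpow_mul_exp_neg_mul_sq hb (by norm_num : (-1:ℝ) < 2)).const_mul
    ((√(2 * π * v))⁻¹)
  refine h.congr (Filter.Eventually.of_forall fun x => ?_)
  show (√(2 * π * v))⁻¹ * (x ^ (2:ℝ) * rexp (-(2 * (v:ℝ))⁻¹ * x ^ 2)) = _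
  rw [show (2:ℝ) = ((2:ℕ):ℝ) by norm_num, Real.rpow_natCast]
  push_cast
  ring

lemma r2r_integrable_id_gaussianReal (hv : v ≠ 0) :
    Integrable (fun x : ℝ => x) (gaussianReal 0 v) := by
  have hb : (0:ℝ) < (2 * (v:ℝ))⁻¹ := by
    have := r2r_vpos hv; positivity
  rw [r2r_integrable_gaussianReal_iff hv, r2r_gaussianPDFReal_eq]
  have h := (integrable_rpow_mul_exp_neg_mul_sq hb (by norm_num : (-1:ℝ) < 1)).const_mul
    ((√(2 * π * v))⁻¹)
  refine h.congr (Filter.Eventually.of_forall fun x => ?_)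
  show (√(2 * π * v))⁻¹ * (x ^ (1:ℝ) * rexp (-(2 * (v:ℝ))⁻¹ * x ^ 2)) = _
  rw [Real.rpow_one]
  ring

lemma r2r_memℒp_id_gaussianReal (hv : v ≠ 0) :
    MemLp (fun x : ℝ => x) 2 (gaussianReal 0 v) := by
  refine (memLp_two_iff_integrable_sq aestronglyMeasurable_id).mpr ?_
  exact r2r_integrable_sq_gaussianReal hv

lemma r2r_integral_id_gaussianReal (hv : v ≠ 0) :
    ∫ x, x ∂(gaussianReal 0 v) = 0 := by
  rw [r2r_integral_gaussianReal hv]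
  set h : ℝ → ℝ := fun x => gaussianPDFReal 0 v x * x with hh
  have hodd : ∀ x, h (-x) = - h x := by
    intro x
    simp only [hh, r2r_gaussianPDFReal_eq]
    rw [neg_sq]
    ring
  have hmapneg : ∫ x, h x = ∫ x, h (-x) := by
    conv_lhs => rw [← Measure.map_neg_eq_self (volume : Measure ℝ)]
    exact integral_map_equiv (Homeomorph.neg ℝ).toMeasurableEquiv h
  have hkey : ∫ x, h x = - ∫ x, h x := by
    conv_lhs => rw [hmapneg]
    simp_rw [hodd]
    exact integral_neg h
  linarith

lemma r2r_integral_sq_gaussianReal (hv : v ≠ 0) :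
    ∫ x, x ^ 2 ∂(gaussianReal 0 v) = (v : ℝ) := by
  have hvpos := r2r_vpos hv
  have hb : (0:ℝ) < (2 * (v:ℝ))⁻¹ := by positivity
  rw [r2r_integral_gaussianReal hv, r2r_gaussianPDFReal_eq]
  have step1 : ∫ x : ℝ, (√(2 * π * v))⁻¹ * rexp (-(2 * (v:ℝ))⁻¹ * x ^ 2) * x ^ 2
      = (√(2 * π * v))⁻¹ * ∫ x : ℝ, x ^ 2 * rexp (-(2 * (v:ℝ))⁻¹ * x ^ 2) := by
    rw [← integral_const_mul]
    congr 1; funext x; ring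
  rw [step1]
  have step2 : ∫ x : ℝ, x ^ 2 * rexp (-(2 * (v:ℝ))⁻¹ * x ^ 2)
      = 2 * ∫ x in Set.Ioi (0:ℝ), x ^ 2 * rexp (-(2 * (v:ℝ))⁻¹ * x ^ 2) := by
    rw [← integral_comp_abs (f := fun x => x ^ 2 * rexp (-(2 * (v:ℝ))⁻¹ * x ^ 2))]
    congr 1; funext x; rw [sq_abs]
  rw [step2]
  have step3 : ∫ x in Set.Ioi (0:ℝ), x ^ 2 * rexp (-(2 * (v:ℝ))⁻¹ * x ^ 2)
      = ((2 * (v:ℝ))⁻¹) ^ (-(3:ℝ)/2) * (1/2) * Gamma (3/2) := by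
    have h := integral_rpow_mul_exp_neg_mul_rpow (by norm_num : (0:ℝ) < 2)
      (by norm_num : (-1:ℝ) < 2) hb
    rw [show ((2:ℝ)+1)/2 = 3/2 by norm_num, show (-((2:ℝ)+1))/2 = -(3:ℝ)/2 by norm_num] at h
    rw [← h]
    refine setIntegral_congr_fun measurableSet_Ioi fun x _ => ?_
    rw [← Real.rpow_natCast x 2]
    norm_num
  rw [step3]
  have hgamma : Gamma ((3:ℝ)/2) = √π / 2 := by
    rw [show (3:ℝ)/2 = 1/2 + 1 by norm_num, Real.Gamma_add_one (by norm_num),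
      Real.Gamma_one_half_eq]
    ring
  rw [hgamma]
  have h2v : (0:ℝ) < 2 * (v:ℝ) := by positivity
  have hpow : ((2 * (v:ℝ))⁻¹) ^ (-(3:ℝ)/2) = (2 * (v:ℝ)) * √(2 * (v:ℝ)) := by
    rw [show ((2 * (v:ℝ))⁻¹) = (2 * (v:ℝ)) ^ (-1:ℝ) from (Real.rpow_neg_one _).symm,
      ← Real.rpow_mul h2v.le]
    norm_num
    rw [show (3:ℝ)/2 = 1 + 1/2 by norm_num, Real.rpow_add h2v, Real.rpow_one,
      ← Real.sqrt_eq_rpow, Real.sqrt_mul (by norm_num : (0:ℝ) ≤ 2)]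
  rw [hpow, show 2 * π * (v:ℝ) = (2 * (v:ℝ)) * π by ring, Real.sqrt_mul h2v.le π]
  have hs : √(2 * (v:ℝ)) ≠ 0 := by positivity
  have hp : √π ≠ 0 := by positivity
  field_simp
end GaussAux

section ReflAux
variable {α : ℝ} {v : ℝ≥0}

/-- The reflection of the plane fixing the direction `(1, α)`. -/
noncomputable def r2rR (α : ℝ) : ℝ × ℝ → ℝ × ℝ := fun p =>
  (((1 - α^2) * p.1 + 2*α*p.2)/(1+α^2), (2*α * p.1 + (α^2 - 1) * p.2)/(1+α^2))

lemma r2r_c_ne (α : ℝ) : 1 + α^2 ≠ 0 := by positivity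

lemma r2rR_eq_lin (α : ℝ) : r2rR α = ⇑(Matrix.toLin (Module.Basis.finTwoProd ℝ) (Module.Basis.finTwoProd ℝ)
    !![(1-α^2)/(1+α^2), 2*α/(1+α^2); 2*α/(1+α^2), (α^2-1)/(1+α^2)]) := by
  funext p
  rw [Matrix.toLin_finTwoProd_apply]
  have hc := r2r_c_ne α
  refine Prod.ext ?_ ?_ <;> · simp only [r2rR]; field_simp; try ring

lemma r2rR_measurable (α : ℝ) : Measurable (r2rR α) := by
  rw [r2rR_eq_lin]; exact (Matrix.toLin _ _ _).continuous_of_finiteDimensional.measurable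

lemma r2rR_involutive (α : ℝ) : Function.Involutive (r2rR α) := by
  intro p
  have hc := r2r_c_ne α
  refine Prod.ext ?_ ?_ <;> · simp only [r2rR]; field_simp; ring

lemma r2rR_norm (α : ℝ) (p : ℝ × ℝ) :
    (r2rR α p).1 ^ 2 + (r2rR α p).2 ^ 2 = p.1 ^ 2 + p.2 ^ 2 := by
  have hc := r2r_c_ne α
  simp only [r2rR]; field_simp; ring

lemma r2rR_fst_combo (α : ℝ) (p : ℝ × ℝ) :
    (r2rR α p).1 + α * (r2rR α p).2 = p.1 + α * p.2 := by
  have hc := r2r_c_ne α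
  simp only [r2rR]; field_simp; ring

lemma r2rR_w (hα : α ≠ 0) (p : ℝ × ℝ) :
    (r2rR α p).1 - α⁻¹ * (r2rR α p).2 = -(p.1 - α⁻¹ * p.2) := by
  have hc := r2r_c_ne α
  simp only [r2rR]; field_simp; ring

/-- The reflection as a measurable equivalence. -/
noncomputable def r2rRequiv (α : ℝ) : (ℝ × ℝ) ≃ᵐ (ℝ × ℝ) where
  toFun := r2rR α
  invFun := r2rR α
  left_inv := r2rR_involutive α
  right_inv := r2rR_involutive α
  measurable_toFun := r2rR_measurable α
  measurable_invFun := r2rR_measurable α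

lemma r2rR_map_volume (α : ℝ) :
    Measure.map (r2rR α) (volume : Measure (ℝ × ℝ)) = volume := by
  have hc := r2r_c_ne α
  have hdet : LinearMap.det (Matrix.toLin (Module.Basis.finTwoProd ℝ) (Module.Basis.finTwoProd ℝ)
      !![(1-α^2)/(1+α^2), 2*α/(1+α^2); 2*α/(1+α^2), (α^2-1)/(1+α^2)]) = -1 := by
    rw [LinearMap.det_toLin, Matrix.det_fin_two_of]
    field_simp
    ring
  rw [r2rR_eq_lin]
  rw [Measure.map_linearMap_addHaar_eq_smul_addHaar volume (by rw [hdet]; norm_num), hdet]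
  norm_num

/-- withDensity commutes with pushforward along a measurable equivalence. -/
lemma r2r_map_withDensity_equiv {X : Type*} [MeasurableSpace X] (e : X ≃ᵐ X) (μ : Measure X)
    {g : X → ℝ≥0∞} (hg : Measurable g) :
    Measure.map e (μ.withDensity (fun x => g (e x))) = (Measure.map e μ).withDensity g := by
  ext s hs
  rw [Measure.map_apply e.measurable hs, withDensity_apply _ hs,
    withDensity_apply _ (e.measurable hs), setLIntegral_map hs hg e.measurable]

lemma r2r_gauss_prod_density (hv : v ≠ 0) :
    (gaussianReal 0 v).prod (gaussianReal 0 v) =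
      (volume.prod volume).withDensity (fun p => gaussianPDF 0 v p.1 * gaussianPDF 0 v p.2) := by
  have hmeas : Measurable (gaussianPDF 0 v) := measurable_gaussianPDF 0 v
  refine Measure.prod_eq fun s t hs ht => ?_
  rw [withDensity_apply _ (hs.prod ht),
    ← Measure.prod_restrict (μ := (volume : Measure ℝ)) (ν := (volume : Measure ℝ)) s t,
    lintegral_prod_mul hmeas.aemeasurable hmeas.aemeasurable,
    gaussianReal_apply 0 hv s, gaussianReal_apply 0 hv t]

lemma r2r_pdf_refl (hv : v ≠ 0) (p : ℝ × ℝ) :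
    gaussianPDF 0 v (r2rR α p).1 * gaussianPDF 0 v (r2rR α p).2
      = gaussianPDF 0 v p.1 * gaussianPDF 0 v p.2 := by
  have h1 : ∀ a b : ℝ, gaussianPDFReal 0 v a * gaussianPDFReal 0 v b
      = (√(2 * π * v))⁻¹ ^ 2 * rexp (-(2 * (v:ℝ))⁻¹ * (a^2 + b^2)) := by
    intro a b
    simp only [r2r_gaussianPDFReal_eq]
    rw [mul_mul_mul_comm, ← Real.exp_add, ← sq]
    congr 1
    ring
  rw [gaussianPDF, gaussianPDF, gaussianPDF, gaussianPDF,
    ← ENNReal.ofReal_mul (gaussianPDFReal_nonneg 0 v _), ← ENNReal.ofReal_mul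
      (gaussianPDFReal_nonneg 0 v _)]
  congr 1
  rw [h1, h1, r2rR_norm]

lemma r2rR_map_gauss_prod (hα : α ≠ 0) (hv : v ≠ 0) :
    Measure.map (r2rR α) ((gaussianReal 0 v).prod (gaussianReal 0 v))
      = (gaussianReal 0 v).prod (gaussianReal 0 v) := by
  have hD : Measurable (fun p : ℝ × ℝ => gaussianPDF 0 v p.1 * gaussianPDF 0 v p.2) :=
    ((measurable_gaussianPDF 0 v).comp measurable_fst).mul
      ((measurable_gaussianPDF 0 v).comp measurable_snd)
  rw [r2r_gauss_prod_density hv]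
  have hDR : (fun p : ℝ × ℝ => gaussianPDF 0 v p.1 * gaussianPDF 0 v p.2)
      = fun p => gaussianPDF 0 v ((r2rRequiv α p)).1 * gaussianPDF 0 v ((r2rRequiv α p)).2 := by
    funext p
    exact (r2r_pdf_refl hv p).symm
  conv_lhs => rw [hDR]
  have := r2r_map_withDensity_equiv (r2rRequiv α) (volume.prod volume) hD
  rw [show ⇑(r2rRequiv α) = r2rR α from rfl] at this ⊢
  rw [this]
  rw [← Measure.volume_eq_prod, r2rR_map_volume, Measure.volume_eq_prod]

end ReflAux

section MulAux
lemma r2r_L2_mul {Ω : Type*} [MeasurableSpace Ω] {P : Measure Ω}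
    {g h : Ω → ℝ} (hg : MeasureTheory.MemLp g 2 P) (hh : MeasureTheory.MemLp h 2 P) :
    MeasureTheory.Integrable (fun ω => g ω * h ω) P := by
  refine ((hg.integrable_sq.add hh.integrable_sq).div_const 2).mono'
    (hg.aestronglyMeasurable.mul hh.aestronglyMeasurable) ?_
  filter_upwards with ω
  rw [Real.norm_eq_abs, abs_mul]
  simp only [Pi.add_apply]
  nlinarith [sq_nonneg (|g ω| - |h ω|), sq_abs (g ω), sq_abs (h ω), abs_nonneg (g ω), abs_nonneg (h ω)]
end MulAux

/-- **Recorrupted-to-Recorrupted loss identity.**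
Let `x` be a square-integrable random vector and `ε, ε′` be independent of each other and
of `x`, each with `n` mutually independent `N(0, σ²)` coordinates. With
`z = x + ε + αε′` and `z̄ = x + ε − ε′/α`, for every measurable `f` with `f(z)`
square-integrable, `E‖f(z) − z̄‖₂² = E‖f(z) − x‖₂² + n(1 + 1/α²)σ²`. -/
theorem r2r_loss_identity {Ω : Type*} [MeasurableSpace Ω]
    (P : Measure Ω) [IsProbabilityMeasure P] {n : ℕ}
    (σ α : ℝ) (hσ : 0 < σ) (hα : α ≠ 0)
    (x ε ε' : Ω → Fin n → ℝ)
    (hx : Measurable x) (hε : Measurable ε) (hε' : Measurable ε')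
    (hxL2 : ∀ i, MemLp (fun ω => x ω i) 2 P)
    (hindep : iIndepFun ![x, ε, ε'] P)
    (hεcoord : iIndepFun (fun i ω => ε ω i) P)
    (hε'coord : iIndepFun (fun i ω => ε' ω i) P)
    (hεgauss : ∀ i, P.map (fun ω => ε ω i) = gaussianReal 0 (σ ^ 2).toNNReal)
    (hε'gauss : ∀ i, P.map (fun ω => ε' ω i) = gaussianReal 0 (σ ^ 2).toNNReal)
    (z zbar : Ω → Fin n → ℝ)
    (hz : ∀ ω, z ω = x ω + ε ω + α • ε' ω)
    (hzbar : ∀ ω, zbar ω = x ω + ε ω - α⁻¹ • ε' ω)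
    (f : (Fin n → ℝ) → Fin n → ℝ) (hf : Measurable f)
    (hfz : ∀ i, MemLp (fun ω => f (z ω) i) 2 P) :
    ∫ ω, ∑ i, (f (z ω) i - zbar ω i) ^ 2 ∂P
      = (∫ ω, ∑ i, (f (z ω) i - x ω i) ^ 2 ∂P)
        + n * (1 + 1 / α ^ 2) * σ ^ 2 := by
  have hv : (σ ^ 2).toNNReal ≠ 0 := by
    simp only [ne_eq, Real.toNNReal_eq_zero, not_le]
    positivity
  set v : ℝ≥0 := (σ ^ 2).toNNReal with hv_def
  have hvσ : (v : ℝ) = σ ^ 2 := Real.coe_toNNReal _ (sq_nonneg σ)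
  set γ := gaussianReal 0 v with hγ_def
  set ν := Measure.pi (fun _ : Fin n => γ) with hν_def
  have hεi : ∀ i, Measurable fun ω => ε ω i := fun i => (measurable_pi_apply i).comp hε
  have hε'i : ∀ i, Measurable fun ω => ε' ω i := fun i => (measurable_pi_apply i).comp hε'
  -- coordinates are in L²
  have hεL2 : ∀ i, MemLp (fun ω => ε ω i) 2 P := by
    intro i
    have h0 : MemLp (fun y : ℝ => y) 2 (P.map (fun ω => ε ω i)) := by
      rw [hεgauss i]; exact r2r_memℒp_id_gaussianReal hv
    exact (memLp_map_measure_iff aestronglyMeasurable_id (hεi i).aemeasurable).mp h0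
  have hε'L2 : ∀ i, MemLp (fun ω => ε' ω i) 2 P := by
    intro i
    have h0 : MemLp (fun y : ℝ => y) 2 (P.map (fun ω => ε' ω i)) := by
      rw [hε'gauss i]; exact r2r_memℒp_id_gaussianReal hv
    exact (memLp_map_measure_iff aestronglyMeasurable_id (hε'i i).aemeasurable).mp h0
  -- means and second moments
  have hεmean : ∀ i, ∫ ω, ε ω i ∂P = 0 := by
    intro i
    have h1 := integral_map (μ := P) (φ := fun ω => ε ω i) (hεi i).aemeasurable
      (f := fun y : ℝ => y) aestronglyMeasurable_id
    rw [hεgauss i] at h1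
    rw [← h1]
    exact r2r_integral_id_gaussianReal hv
  have hε'mean : ∀ i, ∫ ω, ε' ω i ∂P = 0 := by
    intro i
    have h1 := integral_map (μ := P) (φ := fun ω => ε' ω i) (hε'i i).aemeasurable
      (f := fun y : ℝ => y) aestronglyMeasurable_id
    rw [hε'gauss i] at h1
    rw [← h1]
    exact r2r_integral_id_gaussianReal hv
  have hεsq : ∀ i, ∫ ω, (ε ω i) ^ 2 ∂P = σ ^ 2 := by
    intro i
    have h1 := integral_map (μ := P) (φ := fun ω => ε ω i) (hεi i).aemeasurable
      (f := fun y : ℝ => y ^ 2) (measurable_id.pow_const 2).aestronglyMeasurable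
    rw [hεgauss i] at h1
    rw [← h1, ← hvσ]
    exact r2r_integral_sq_gaussianReal hv
  have hε'sq : ∀ i, ∫ ω, (ε' ω i) ^ 2 ∂P = σ ^ 2 := by
    intro i
    have h1 := integral_map (μ := P) (φ := fun ω => ε' ω i) (hε'i i).aemeasurable
      (f := fun y : ℝ => y ^ 2) (measurable_id.pow_const 2).aestronglyMeasurable
    rw [hε'gauss i] at h1
    rw [← h1, ← hvσ]
    exact r2r_integral_sq_gaussianReal hv
  -- independence facts
  have hF : ∀ i : Fin 3, Measurable (![x, ε, ε'] i) := by
    intro i; fin_cases i <;> assumption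
  have hindepεε' : IndepFun ε ε' P := hindep.indepFun (show (1 : Fin 3) ≠ 2 by decide)
  have hindepi : ∀ i, IndepFun (fun ω => ε ω i) (fun ω => ε' ω i) P := fun i =>
    hindepεε'.comp (measurable_pi_apply i) (measurable_pi_apply i)
  have hεε'int : ∀ i, Integrable (fun ω => ε ω i * ε' ω i) P := fun i =>
    (hindepi i).integrable_mul ((hεL2 i).integrable one_le_two)
      ((hε'L2 i).integrable one_le_two)
  have hεε'zero : ∀ i, ∫ ω, ε ω i * ε' ω i ∂P = 0 := by
    intro i
    have := (hindepi i).integral_mul_eq_mul_integral ((hεL2 i).integrable one_le_two).aestronglyMeasurable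
      ((hε'L2 i).integrable one_le_two).aestronglyMeasurable
    rw [show (fun ω => ε ω i * ε' ω i) = (fun ω => ε ω i) * (fun ω => ε' ω i) from rfl, this,
      hεmean i, hε'mean i, mul_zero]
  -- law identification
  have hmapε : P.map ε = ν := by
    refine (Measure.pi_eq fun s hs => ?_).symm
    rw [Measure.map_apply hε (MeasurableSet.univ_pi hs)]
    have hpre : ε ⁻¹' (Set.univ.pi s) = ⋂ i, (fun ω => ε ω i) ⁻¹' (s i) := by
      ext ω; simp [Set.mem_pi]
    rw [hpre, hεcoord.meas_iInter (fun i => ⟨s i, hs i, rfl⟩)]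
    exact Finset.prod_congr rfl fun i _ => by
      rw [← Measure.map_apply (hεi i) (hs i), hεgauss i]
  have hmapε' : P.map ε' = ν := by
    refine (Measure.pi_eq fun s hs => ?_).symm
    rw [Measure.map_apply hε' (MeasurableSet.univ_pi hs)]
    have hpre : ε' ⁻¹' (Set.univ.pi s) = ⋂ i, (fun ω => ε' ω i) ⁻¹' (s i) := by
      ext ω; simp [Set.mem_pi]
    rw [hpre, hε'coord.meas_iInter (fun i => ⟨s i, hs i, rfl⟩)]
    exact Finset.prod_congr rfl fun i _ => by
      rw [← Measure.map_apply (hε'i i) (hs i), hε'gauss i]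
  have hpairlaw : P.map (fun ω => (ε ω, ε' ω)) = ν.prod ν := by
    rw [(indepFun_iff_map_prod_eq_prod_map_map hε.aemeasurable hε'.aemeasurable).mp hindepεε',
      hmapε, hmapε']
  have hxpair : IndepFun x (fun ω => (ε ω, ε' ω)) P :=
    (hindep.indepFun_prodMk hF 1 2 0 (by decide) (by decide)).symm
  have htriple : P.map (fun ω => (x ω, (ε ω, ε' ω))) = (P.map x).prod (ν.prod ν) := by
    rw [(indepFun_iff_map_prod_eq_prod_map_map hx.aemeasurable
      (hε.prodMk hε').aemeasurable).mp hxpair, hpairlaw]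
  haveI : IsProbabilityMeasure (P.map x) := Measure.isProbabilityMeasure_map hx.aemeasurable
  -- the vectorised reflection
  set Rv : (Fin n → ℝ) × (Fin n → ℝ) → (Fin n → ℝ) × (Fin n → ℝ) := fun p =>
    (fun i => (r2rR α (p.1 i, p.2 i)).1, fun i => (r2rR α (p.1 i, p.2 i)).2) with hRv_def
  have hRvmeas : Measurable Rv := by
    have hi : ∀ i : Fin n, Measurable fun p : (Fin n → ℝ) × (Fin n → ℝ) => (p.1 i, p.2 i) :=
      fun i => ((measurable_pi_apply i).comp measurable_fst).prodMk
        ((measurable_pi_apply i).comp measurable_snd)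
    exact (measurable_pi_lambda _ fun i => ((r2rR_measurable α).comp (hi i)).fst).prodMk
      (measurable_pi_lambda _ fun i => ((r2rR_measurable α).comp (hi i)).snd)
  have hRvlaw : Measure.map Rv (ν.prod ν) = ν.prod ν := by
    have hmid : MeasurePreserving (fun (a : Fin n → ℝ × ℝ) i => r2rR α (a i))
        (Measure.pi fun _ : Fin n => γ.prod γ) (Measure.pi fun _ : Fin n => γ.prod γ) :=
      measurePreserving_pi _ _ fun _ => ⟨r2rR_measurable α, r2rR_map_gauss_prod hα hv⟩
    have hA : MeasurePreserving (MeasurableEquiv.arrowProdEquivProdArrow ℝ ℝ (Fin n))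
        (Measure.pi fun _ : Fin n => γ.prod γ) (ν.prod ν) :=
      measurePreserving_arrowProdEquivProdArrow ℝ ℝ (Fin n) _ _
    have hcomp : Rv = (⇑(MeasurableEquiv.arrowProdEquivProdArrow ℝ ℝ (Fin n)) ∘
        (fun (a : Fin n → ℝ × ℝ) i => r2rR α (a i))) ∘
        ⇑(MeasurableEquiv.arrowProdEquivProdArrow ℝ ℝ (Fin n)).symm := rfl
    rw [hcomp,
      ← Measure.map_map ((MeasurableEquiv.arrowProdEquivProdArrow ℝ ℝ (Fin n)).measurable.comp
          hmid.measurable)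
        (MeasurableEquiv.arrowProdEquivProdArrow ℝ ℝ (Fin n)).symm.measurable,
      ← Measure.map_map (MeasurableEquiv.arrowProdEquivProdArrow ℝ ℝ (Fin n)).measurable
        hmid.measurable,
      (MeasurePreserving.symm _ hA).map_eq, hmid.map_eq, hA.map_eq]
  have hSlaw : Measure.map (Prod.map id Rv) ((P.map x).prod (ν.prod ν))
      = (P.map x).prod (ν.prod ν) := by
    rw [← Measure.map_prod_map _ _ measurable_id hRvmeas, Measure.map_id, hRvlaw]
  -- the key cross-term integrand
  set G : (Fin n → ℝ) × ((Fin n → ℝ) × (Fin n → ℝ)) → ℝ := fun q =>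
    ∑ i, (f (q.1 + q.2.1 + α • q.2.2) i - q.1 i) * (q.2.1 i - α⁻¹ * q.2.2 i) with hG_def
  have hGmeas : Measurable G := by
    apply Finset.measurable_sum
    intro i _
    have harg : Measurable fun q : (Fin n → ℝ) × ((Fin n → ℝ) × (Fin n → ℝ)) =>
        q.1 + q.2.1 + α • q.2.2 := by
      refine Measurable.add (Measurable.add measurable_fst ?_) ?_
      · exact measurable_fst.comp measurable_snd
      · exact (measurable_snd.comp measurable_snd).const_smul α
    refine Measurable.mul ?_ ?_
    · exact ((measurable_pi_apply i).comp (hf.comp harg)).sub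
        ((measurable_pi_apply i).comp measurable_fst)
    · exact ((measurable_pi_apply i).comp (measurable_fst.comp measurable_snd)).sub
        (Measurable.const_mul (f := fun q : (Fin n → ℝ) × ((Fin n → ℝ) × (Fin n → ℝ)) => q.2.2 i)
          ((measurable_pi_apply i).comp (measurable_snd.comp measurable_snd)) α⁻¹)
  have hGS : ∀ q, G (Prod.map id Rv q) = - G q := by
    intro q
    have h1 : (q.1 + (Rv q.2).1 + α • (Rv q.2).2) = q.1 + q.2.1 + α • q.2.2 := by
      funext j
      have hcombo := r2rR_fst_combo α (q.2.1 j, q.2.2 j)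
      simp only [hRv_def, Pi.add_apply, Pi.smul_apply, smul_eq_mul] at hcombo ⊢
      linarith
    simp only [hG_def, Prod.map, id]
    rw [h1, ← Finset.sum_neg_distrib]
    refine Finset.sum_congr rfl fun i _ => ?_
    have h2 := r2rR_w hα (q.2.1 i, q.2.2 i)
    simp only [hRv_def] at h2 ⊢
    rw [h2]
    ring
  have hT : Measurable fun ω => (x ω, (ε ω, ε' ω)) := hx.prodMk (hε.prodMk hε')
  have hGzero : ∫ q, G q ∂((P.map x).prod (ν.prod ν)) = 0 := by
    have hmap2 : ∫ q, G q ∂((P.map x).prod (ν.prod ν))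
        = ∫ q, G (Prod.map id Rv q) ∂((P.map x).prod (ν.prod ν)) := by
      conv_lhs => rw [← hSlaw]
      exact integral_map (measurable_id.prodMap hRvmeas).aemeasurable
        hGmeas.aestronglyMeasurable
    have hneg : ∫ q, G q ∂((P.map x).prod (ν.prod ν))
        = - ∫ q, G q ∂((P.map x).prod (ν.prod ν)) := by
      conv_lhs => rw [hmap2]
      simp_rw [hGS]
      exact integral_neg _
    linarith
  have hcross : ∫ ω, ∑ i, (f (x ω + ε ω + α • ε' ω) i - x ω i) * (ε ω i - α⁻¹ * ε' ω i) ∂P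
      = 0 := by
    have hmap1 : ∫ ω, G (x ω, (ε ω, ε' ω)) ∂P = ∫ q, G q ∂((P.map x).prod (ν.prod ν)) := by
      rw [← htriple]
      exact (integral_map hT.aemeasurable hGmeas.aestronglyMeasurable).symm
    exact hmap1.trans hGzero
  -- quadratic term
  have hwL2 : ∀ i, MemLp (fun ω => ε ω i - α⁻¹ * ε' ω i) 2 P := fun i =>
    (hεL2 i).sub ((hε'L2 i).const_mul α⁻¹)
  have hquad : ∀ i, ∫ ω, (ε ω i - α⁻¹ * ε' ω i) ^ 2 ∂P = (1 + 1 / α ^ 2) * σ ^ 2 := by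
    intro i
    have hexp : (fun ω => (ε ω i - α⁻¹ * ε' ω i) ^ 2)
        = fun ω => ((ε ω i) ^ 2 - (2 * α⁻¹) * (ε ω i * ε' ω i)) + α⁻¹ ^ 2 * (ε' ω i) ^ 2 := by
      funext ω; ring
    have h1' : Integrable (fun ω => (ε ω i) ^ 2) P := (hεL2 i).integrable_sq
    have h2' : Integrable (fun ω => (2 * α⁻¹) * (ε ω i * ε' ω i)) P :=
      (hεε'int i).const_mul (2 * α⁻¹)
    have h12 : Integrable (fun ω => (ε ω i) ^ 2 - (2 * α⁻¹) * (ε ω i * ε' ω i)) P := h1'.sub h2'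
    have h3 : Integrable (fun ω => α⁻¹ ^ 2 * (ε' ω i) ^ 2) P :=
      ((hε'L2 i).integrable_sq).const_mul (α⁻¹ ^ 2)
    rw [hexp, integral_add h12 h3, integral_sub h1' h2',
      integral_const_mul, integral_const_mul, hεsq i, hε'sq i, hεε'zero i]
    field_simp
    ring
  -- decomposition and conclusion
  have hAint : Integrable (fun ω => ∑ i, (f (z ω) i - x ω i) ^ 2) P :=
    integrable_finset_sum _ fun i _ => ((hfz i).sub (hxL2 i)).integrable_sq
  have hBint : Integrable (fun ω => ∑ i, (f (z ω) i - x ω i) * (ε ω i - α⁻¹ * ε' ω i)) P :=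
    integrable_finset_sum _ fun i _ => r2r_L2_mul ((hfz i).sub (hxL2 i)) (hwL2 i)
  have hCint : Integrable (fun ω => ∑ i, (ε ω i - α⁻¹ * ε' ω i) ^ 2) P :=
    integrable_finset_sum _ fun i _ => (hwL2 i).integrable_sq
  have hpt : ∀ ω, ∑ i, (f (z ω) i - zbar ω i) ^ 2 =
      ((∑ i, (f (z ω) i - x ω i) ^ 2)
        - 2 * (∑ i, (f (z ω) i - x ω i) * (ε ω i - α⁻¹ * ε' ω i)))
        + ∑ i, (ε ω i - α⁻¹ * ε' ω i) ^ 2 := by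
    intro ω
    rw [Finset.mul_sum, ← Finset.sum_sub_distrib, ← Finset.sum_add_distrib]
    refine Finset.sum_congr rfl fun i _ => ?_
    have hzb : zbar ω i = x ω i + ε ω i - α⁻¹ * ε' ω i := by
      rw [hzbar ω]; simp [Pi.add_apply, Pi.sub_apply, Pi.smul_apply, smul_eq_mul]
    rw [hzb]
    ring
  have hC : ∫ ω, ∑ i, (ε ω i - α⁻¹ * ε' ω i) ^ 2 ∂P = n * ((1 + 1 / α ^ 2) * σ ^ 2) := by
    rw [integral_finset_sum _ fun i _ => (hwL2 i).integrable_sq,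
      Finset.sum_congr rfl fun i _ => hquad i, Finset.sum_const, Finset.card_univ,
      Fintype.card_fin, nsmul_eq_mul]
  have hB0 : ∫ ω, ∑ i, (f (z ω) i - x ω i) * (ε ω i - α⁻¹ * ε' ω i) ∂P = 0 := by
    simp_rw [hz]
    exact hcross
  have hB2 : Integrable
      (fun ω => 2 * ∑ i, (f (z ω) i - x ω i) * (ε ω i - α⁻¹ * ε' ω i)) P :=
    hBint.const_mul 2
  have hAB : Integrable (fun ω => (∑ i, (f (z ω) i - x ω i) ^ 2)
      - 2 * ∑ i, (f (z ω) i - x ω i) * (ε ω i - α⁻¹ * ε' ω i)) P := hAint.sub hB2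
  simp_rw [hpt]
  rw [integral_add hAB hCint, integral_sub hAint hB2, integral_const_mul, hB0, hC]
  ring
end

section
/- (Hard-thresholding of singular values solves rank-regularized approximation.) Let Y ∈ ℝ^{n×k} have a singular value decomposition Y = U S Vᵀ, where U ∈ ℝ^{n×n} and V ∈ ℝ^{k×k} are orthogonal matrices and S ∈ ℝ^{n×k} has S_{ij} = 0 for i ≠ j and nonnegative diagonal entries s₁ ≥ s₂ ≥ … ≥ s_{min(n,k)} ≥ 0. Let γ ≥ 0 and let φ_{hard,√γ}(S) denote the matrix obtained from S by replacing each diagonal entry s_i by s_i if s_i > √γ and by 0 otherwise. Then X̂ = U φ_{hard,√γ}(S) Vᵀ is a global minimizer over X ∈ ℝ^{n×k} of the objective ‖Y − X‖_F² + γ · rank(X). -/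
open Matrix

/-- Sum of squares over a rectangular-diagonal-supported function reduces to diagonal sum. -/
lemma diag_double_sum {n k : ℕ} (f : Fin n → Fin k → ℝ)
    (hf : ∀ (i : Fin n) (j : Fin k), (i : ℕ) ≠ (j : ℕ) → f i j = 0) :
    ∑ i, ∑ j, f i j
      = ∑ l : Fin (min n k),
          f (Fin.castLE (min_le_left n k) l) (Fin.castLE (min_le_right n k) l) := by
  classical
  have h1 : ∀ i : Fin n, ∑ j, f i j = if h : (i : ℕ) < k then f i ⟨i, h⟩ else 0 := by
    intro i
    split_ifs with h
    · refine Finset.sum_eq_single_of_mem (⟨(i : ℕ), h⟩ : Fin k) (Finset.mem_univ _) ?_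
      intro j _ hj
      exact hf i j (fun e => hj (Fin.ext e.symm))
    · exact Finset.sum_eq_zero fun j _ => hf i j (fun e => h (e ▸ j.isLt))
  rw [Finset.sum_congr rfl fun i _ => h1 i]
  have h2 : (Finset.univ.image (Fin.castLE (min_le_left n k))) ⊆ Finset.univ :=
    Finset.subset_univ _
  rw [← Finset.sum_subset h2 (fun i _ hi => ?_), Finset.sum_image ?_]
  · refine Finset.sum_congr rfl fun l _ => ?_
    have hl : ((Fin.castLE (min_le_left n k) l : Fin n) : ℕ) < k :=
      lt_of_lt_of_le l.isLt (min_le_right n k)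
    rw [dif_pos hl]
    congr 1
  · intro x _ y _ hxy
    exact Fin.castLE_injective _ hxy
  · rw [dif_neg]
    intro hik
    have hin : (i : ℕ) < min n k := lt_min i.isLt hik
    exact hi (Finset.mem_image.2 ⟨⟨i, hin⟩, Finset.mem_univ _, Fin.ext rfl⟩)


lemma rank_thresh_le {n k : ℕ} (S : Matrix (Fin n) (Fin k) ℝ)
    (hSdiag : ∀ (i : Fin n) (j : Fin k), (i : ℕ) ≠ (j : ℕ) → S i j = 0) (c : ℝ) :
    (Matrix.of fun i j => if c < S i j then S i j else 0 : Matrix (Fin n) (Fin k) ℝ).rank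
      ≤ (Finset.univ.filter (fun l : Fin (min n k) =>
          c < S (Fin.castLE (min_le_left n k) l) (Fin.castLE (min_le_right n k) l))).card := by
  classical
  set a : Fin (min n k) → Fin n := Fin.castLE (min_le_left n k) with ha
  set b : Fin (min n k) → Fin k := Fin.castLE (min_le_right n k) with hb
  set D : Matrix (Fin n) (Fin k) ℝ := Matrix.of fun i j => if c < S i j then S i j else 0 with hD
  set T : Finset (Fin (min n k)) := Finset.univ.filter (fun l => c < S (a l) (b l)) with hT
  let Pm : Matrix (Fin n) ↥T ℝ := Matrix.of fun i l => if (i : ℕ) = ((l : Fin (min n k)) : ℕ) then 1 else 0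
  let Qm : Matrix ↥T (Fin k) ℝ := Matrix.of fun l j => D (a (l : Fin (min n k))) j
  have hfact : D = Pm * Qm := by
    ext i j
    rw [Matrix.mul_apply]
    by_cases h : ∃ l : ↥T, ((l : Fin (min n k)) : ℕ) = (i : ℕ)
    · obtain ⟨l₀, hl₀⟩ := h
      have hal₀ : a (l₀ : Fin (min n k)) = i := Fin.ext hl₀
      rw [Fintype.sum_eq_single l₀ ?_]
      · simp [Pm, Qm, hl₀.symm, hal₀]
      · intro l hl
        have : (i : ℕ) ≠ ((l : Fin (min n k)) : ℕ) := by
          intro e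
          exact hl (Subtype.ext (Fin.ext (by omega)))
        simp [Pm, this]
    · have hzero : ∀ l : ↥T, Pm i l * Qm l j = 0 := by
        intro l
        have : (i : ℕ) ≠ ((l : Fin (min n k)) : ℕ) := fun e => h ⟨l, e.symm⟩
        simp [Pm, this]
      rw [Finset.sum_eq_zero fun l _ => hzero l]
      by_contra hDij
      have hc : c < S i j ∧ S i j ≠ 0 := by
        by_cases hcs : c < S i j
        · refine ⟨hcs, fun h0 => hDij ?_⟩
          simp [D, hcs, h0]
        · exact absurd (by simp [D, hcs]) hDij
      have hij : (i : ℕ) = (j : ℕ) := by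
        by_contra hne
        exact hc.2 (hSdiag i j hne)
      have him : (i : ℕ) < min n k := lt_min i.isLt (hij ▸ j.isLt)
      have hbl : b ⟨(i : ℕ), him⟩ = j := Fin.ext hij
      have hal : a ⟨(i : ℕ), him⟩ = i := Fin.ext rfl
      have hmem : (⟨(i : ℕ), him⟩ : Fin (min n k)) ∈ T := by
        rw [hT, Finset.mem_filter]
        exact ⟨Finset.mem_univ _, by rw [hal, hbl]; exact hc.1⟩
      exact h ⟨⟨_, hmem⟩, rfl⟩
  calc D.rank ≤ Pm.rank := hfact ▸ Matrix.rank_mul_le_left Pm Qm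
    _ ≤ Fintype.card ↥T := Matrix.rank_le_card_width Pm
    _ = T.card := Fintype.card_coe T

lemma frob_eq_trace {n k : ℕ} (B : Matrix (Fin n) (Fin k) ℝ) :
    ∑ i, ∑ j, B i j ^ 2 = Matrix.trace (Bᵀ * B) := by
  rw [Matrix.trace]
  simp only [Matrix.diag, Matrix.mul_apply, Matrix.transpose_apply, sq]
  rw [Finset.sum_comm]

lemma frob_conj {n k : ℕ} (U : Matrix (Fin n) (Fin n) ℝ) (V : Matrix (Fin k) (Fin k) ℝ)
    (hU : Uᵀ * U = 1) (hV : Vᵀ * V = 1) (A : Matrix (Fin n) (Fin k) ℝ) :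
    ∑ i, ∑ j, (U * A * Vᵀ) i j ^ 2 = ∑ i, ∑ j, A i j ^ 2 := by
  rw [frob_eq_trace, frob_eq_trace]
  calc Matrix.trace ((U * A * Vᵀ)ᵀ * (U * A * Vᵀ))
      = Matrix.trace (V * (Aᵀ * (Uᵀ * (U * (A * Vᵀ))))) := by
        simp only [Matrix.transpose_mul, Matrix.transpose_transpose, Matrix.mul_assoc]
    _ = Matrix.trace (V * (Aᵀ * (A * Vᵀ))) := by
        rw [← Matrix.mul_assoc Uᵀ U, hU, Matrix.one_mul]
    _ = Matrix.trace (Aᵀ * (A * (Vᵀ * V))) := by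
        rw [Matrix.trace_mul_comm]
        simp only [Matrix.mul_assoc]
    _ = Matrix.trace (Aᵀ * A) := by rw [hV, Matrix.mul_one]


lemma esq {k : ℕ} (x : EuclideanSpace ℝ (Fin k)) : ‖x‖ ^ 2 = ∑ j, x j ^ 2 := by
  rw [← real_inner_self_eq_norm_sq, PiLp.inner_apply]
  simp [RCLike.inner_apply, conj_trivial, sq]

lemma key_lb {n k : ℕ} (S Z : Matrix (Fin n) (Fin k) ℝ)
    (hSdiag : ∀ (i : Fin n) (j : Fin k), (i : ℕ) ≠ (j : ℕ) → S i j = 0)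
    (γ : ℝ) (hγ : 0 ≤ γ) :
    (∑ l : Fin (min n k),
        min (S (Fin.castLE (min_le_left n k) l) (Fin.castLE (min_le_right n k) l) ^ 2) γ)
      ≤ (∑ i, ∑ j, (S i j - Z i j) ^ 2) + γ * (Z.rank : ℝ) := by
  classical
  set a : Fin (min n k) → Fin n := Fin.castLE (min_le_left n k) with ha
  set b : Fin (min n k) → Fin k := Fin.castLE (min_le_right n k) with hb
  set rz : Fin n → EuclideanSpace ℝ (Fin k) := fun i => (WithLp.equiv 2 _).symm (Z i) with hrz
  set W : Submodule ℝ (EuclideanSpace ℝ (Fin k)) := Submodule.span ℝ (Set.range rz) with hWdef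
  set e : Fin k → EuclideanSpace ℝ (Fin k) := fun j => EuclideanSpace.single j 1 with he
  set p : Fin k → ℝ :=
    fun j => ‖(Submodule.orthogonalProjectionOnto W (e j) : EuclideanSpace ℝ (Fin k))‖ ^ 2 with hp
  -- dimension of the row space is at most the rank
  have hW_rank : (Module.finrank ℝ W : ℝ) ≤ (Z.rank : ℝ) := by
    have h1 : Zᵀ.rank = Module.finrank ℝ (Submodule.span ℝ (Set.range Z)) := by
      unfold Matrix.rank
      rw [Matrix.range_mulVecLin]
      rfl
    have h2 : Module.finrank ℝ W = Module.finrank ℝ (Submodule.span ℝ (Set.range Z)) := by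
      have hmap : Submodule.map ((WithLp.linearEquiv 2 ℝ (Fin k → ℝ)) :
            EuclideanSpace ℝ (Fin k) →ₗ[ℝ] (Fin k → ℝ)) W = Submodule.span ℝ (Set.range Z) := by
        rw [hWdef, Submodule.map_span, ← Set.range_comp]
        rfl
      rw [← LinearEquiv.finrank_map_eq (WithLp.linearEquiv 2 ℝ (Fin k → ℝ)) W, hmap]
    rw [h2, ← h1, Matrix.rank_transpose]
  -- Pythagoras
  have pyth : ∀ j, p j + ‖e j - (Submodule.orthogonalProjectionOnto W (e j) : EuclideanSpace ℝ (Fin k))‖ ^ 2 = 1 := by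
    intro j
    have h := Submodule.norm_sq_eq_add_norm_sq_projection (e j) W
    have h1 : ‖e j‖ = 1 := by
      rw [he]
      simpa using EuclideanSpace.norm_single (𝕜 := ℝ) j 1
    have h2 : (Submodule.orthogonalProjectionOnto Wᗮ (e j) : EuclideanSpace ℝ (Fin k))
        = e j - Submodule.orthogonalProjectionOnto W (e j) := W.starProjection_orthogonal_val _
    have h3 : ‖Submodule.orthogonalProjectionOnto W (e j)‖
        = ‖(Submodule.orthogonalProjectionOnto W (e j) : EuclideanSpace ℝ (Fin k))‖ := rfl
    have h4 : ‖Submodule.orthogonalProjectionOnto Wᗮ (e j)‖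
        = ‖(Submodule.orthogonalProjectionOnto Wᗮ (e j) : EuclideanSpace ℝ (Fin k))‖ := rfl
    rw [h1, h3, h4, h2] at h
    simp only [hp]
    linarith
  have hp0 : ∀ j, 0 ≤ p j := fun j => sq_nonneg _
  have hp1 : ∀ j, p j ≤ 1 := by
    intro j
    have := pyth j
    nlinarith [sq_nonneg ‖e j - (Submodule.orthogonalProjectionOnto W (e j) : EuclideanSpace ℝ (Fin k))‖]
  -- trace identity
  have sum_p : ∑ j, p j = (Module.finrank ℝ W : ℝ) := by
    set B := stdOrthonormalBasis ℝ W with hB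
    have hrepr : ∀ (x : W), ‖(x : EuclideanSpace ℝ (Fin k))‖ ^ 2
        = ∑ l, (inner ℝ ((B l : EuclideanSpace ℝ (Fin k))) ((x : EuclideanSpace ℝ (Fin k))) : ℝ) ^ 2 := by
      intro x
      have h1 : ‖(x : EuclideanSpace ℝ (Fin k))‖ = ‖x‖ := rfl
      have h2 : ‖x‖ = ‖B.repr x‖ := (B.repr.norm_map x).symm
      rw [h1, h2, esq]
      refine Finset.sum_congr rfl fun l _ => ?_
      rw [B.repr_apply_apply]
      rfl
    have hproj : ∀ j l, (inner ℝ ((B l : EuclideanSpace ℝ (Fin k)))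
        ((Submodule.orthogonalProjectionOnto W (e j) : EuclideanSpace ℝ (Fin k))) : ℝ)
        = inner ℝ ((B l : EuclideanSpace ℝ (Fin k))) (e j) := by
      intro j l
      have h0 : (inner ℝ (e j - (Submodule.orthogonalProjectionOnto W (e j) : EuclideanSpace ℝ (Fin k)))
          ((B l : EuclideanSpace ℝ (Fin k))) : ℝ) = 0 :=
        W.starProjection_inner_eq_zero (e j) _ (B l).2
      rw [inner_sub_left] at h0
      have c1 := real_inner_comm (e j) ((B l : EuclideanSpace ℝ (Fin k)))
      have c2 := real_inner_comm ((Submodule.orthogonalProjectionOnto W (e j) : EuclideanSpace ℝ (Fin k)))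
        ((B l : EuclideanSpace ℝ (Fin k)))
      linarith [h0, c1, c2]
    have hpj : ∀ j, p j = ∑ l, (inner ℝ ((B l : EuclideanSpace ℝ (Fin k))) (e j) : ℝ) ^ 2 := by
      intro j
      simp only [hp]
      rw [hrepr (Submodule.orthogonalProjectionOnto W (e j))]
      exact Finset.sum_congr rfl fun l _ => by rw [hproj]
    have hinner : ∀ (l) (j : Fin k),
        (inner ℝ ((B l : EuclideanSpace ℝ (Fin k))) (e j) : ℝ) = (B l : EuclideanSpace ℝ (Fin k)) j := by
      intro l j
      rw [he]
      simpa using EuclideanSpace.inner_single_right (𝕜 := ℝ) j 1 ((B l : EuclideanSpace ℝ (Fin k)))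
    calc ∑ j, p j = ∑ j, ∑ l, (inner ℝ ((B l : EuclideanSpace ℝ (Fin k))) (e j) : ℝ) ^ 2 :=
          Finset.sum_congr rfl fun j _ => hpj j
      _ = ∑ l, ∑ j, (inner ℝ ((B l : EuclideanSpace ℝ (Fin k))) (e j) : ℝ) ^ 2 := Finset.sum_comm
      _ = ∑ l : Fin (Module.finrank ℝ W), (1 : ℝ) := by
          refine Finset.sum_congr rfl fun l _ => ?_
          have : ∑ j, (inner ℝ ((B l : EuclideanSpace ℝ (Fin k))) (e j) : ℝ) ^ 2
              = ‖(B l : EuclideanSpace ℝ (Fin k))‖ ^ 2 := by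
            rw [esq]
            exact Finset.sum_congr rfl fun j _ => by rw [hinner]
          rw [this]
          have hn : ‖B l‖ = 1 := B.orthonormal.1 l
          have hn' : ‖(B l : EuclideanSpace ℝ (Fin k))‖ = ‖B l‖ := rfl
          rw [hn', hn]
          norm_num
      _ = (Module.finrank ℝ W : ℝ) := by simp
  -- row-wise lower bound
  have row_lb : ∀ l : Fin (min n k),
      S (a l) (b l) ^ 2 * (1 - p (b l)) ≤ ∑ j, (S (a l) j - Z (a l) j) ^ 2 := by
    intro l
    set s := S (a l) (b l) with hs
    have hrow : ∀ j, S (a l) j = (s • e (b l)) j := by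
      intro j
      by_cases hj : j = b l
      · subst hj
        simp [he, hs, EuclideanSpace.single_apply]
      · have hne : ((a l : Fin n) : ℕ) ≠ (j : ℕ) := by
          intro hcontra
          refine hj (Fin.ext ?_)
          have hbv : ((b l : Fin k) : ℕ) = (l : ℕ) := rfl
          have hav : ((a l : Fin n) : ℕ) = (l : ℕ) := rfl
          omega
        rw [hSdiag _ _ hne]
        simp [he, EuclideanSpace.single_apply, hj]
    have h2 : ∑ j, (S (a l) j - Z (a l) j) ^ 2 = ‖(s • e (b l)) - rz (a l)‖ ^ 2 := by
      rw [esq]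
      refine Finset.sum_congr rfl fun j _ => ?_
      congr 1
      rw [hrow j]
      rfl
    have hmem : rz (a l) ∈ W := Submodule.subset_span ⟨a l, rfl⟩
    have h3 : ‖(s • e (b l)) - (Submodule.orthogonalProjectionOnto W (s • e (b l)) : EuclideanSpace ℝ (Fin k))‖
        ≤ ‖(s • e (b l)) - rz (a l)‖ := by
      rw [← Submodule.starProjection_apply, Submodule.starProjection_minimal]
      refine ciInf_le ⟨0, ?_⟩ (⟨rz (a l), hmem⟩ : W)
      rintro x ⟨y, rfl⟩
      exact norm_nonneg _
    have h4 : (Submodule.orthogonalProjectionOnto W (s • e (b l)) : EuclideanSpace ℝ (Fin k))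
        = s • (Submodule.orthogonalProjectionOnto W (e (b l)) : EuclideanSpace ℝ (Fin k)) := by
      rw [_root_.map_smul]
      rfl
    have h6 : ‖e (b l) - (Submodule.orthogonalProjectionOnto W (e (b l)) : EuclideanSpace ℝ (Fin k))‖ ^ 2
        = 1 - p (b l) := by linarith [pyth (b l)]
    have h5 : ‖(s • e (b l)) - (Submodule.orthogonalProjectionOnto W (s • e (b l)) : EuclideanSpace ℝ (Fin k))‖ ^ 2
        = s ^ 2 * (1 - p (b l)) := by
      rw [h4, ← smul_sub, norm_smul, mul_pow, Real.norm_eq_abs, sq_abs, h6]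
    calc s ^ 2 * (1 - p (b l))
        = ‖(s • e (b l)) - (Submodule.orthogonalProjectionOnto W (s • e (b l)) : EuclideanSpace ℝ (Fin k))‖ ^ 2 :=
          h5.symm
      _ ≤ ‖(s • e (b l)) - rz (a l)‖ ^ 2 := by
          exact pow_le_pow_left₀ (norm_nonneg _) h3 2
      _ = ∑ j, (S (a l) j - Z (a l) j) ^ 2 := h2.symm
  -- assembling
  have hA : ∑ l : Fin (min n k), (∑ j, (S (a l) j - Z (a l) j) ^ 2)
      ≤ ∑ i, ∑ j, (S i j - Z i j) ^ 2 := by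
    rw [← Finset.sum_image (g := a) (f := fun i => ∑ j, (S i j - Z i j) ^ 2)
      (fun x _ y _ h => Fin.castLE_injective _ h)]
    exact Finset.sum_le_sum_of_subset_of_nonneg (Finset.subset_univ _)
      (fun i _ _ => Finset.sum_nonneg fun j _ => sq_nonneg _)
  have hB : ∑ l : Fin (min n k), p (b l) ≤ ∑ j, p j := by
    rw [← Finset.sum_image (g := b) (f := p) (fun x _ y _ h => Fin.castLE_injective _ h)]
    exact Finset.sum_le_sum_of_subset_of_nonneg (Finset.subset_univ _) (fun j _ _ => hp0 j)
  have step1 : (∑ l : Fin (min n k), min (S (a l) (b l) ^ 2) γ)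
      ≤ ∑ l : Fin (min n k), (S (a l) (b l) ^ 2 * (1 - p (b l)) + γ * p (b l)) := by
    refine Finset.sum_le_sum fun l _ => ?_
    have h1 : min (S (a l) (b l) ^ 2) γ
        = min (S (a l) (b l) ^ 2) γ * (1 - p (b l)) + min (S (a l) (b l) ^ 2) γ * p (b l) := by
      ring
    rw [h1]
    exact add_le_add
      (mul_le_mul_of_nonneg_right (min_le_left _ _) (by linarith [hp1 (b l)]))
      (mul_le_mul_of_nonneg_right (min_le_right _ _) (hp0 (b l)))
  calc (∑ l : Fin (min n k), min (S (a l) (b l) ^ 2) γ)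
      ≤ ∑ l : Fin (min n k), (S (a l) (b l) ^ 2 * (1 - p (b l)) + γ * p (b l)) := step1
    _ = (∑ l : Fin (min n k), S (a l) (b l) ^ 2 * (1 - p (b l)))
        + γ * ∑ l : Fin (min n k), p (b l) := by
        rw [Finset.sum_add_distrib, Finset.mul_sum]
    _ ≤ (∑ i, ∑ j, (S i j - Z i j) ^ 2) + γ * (Z.rank : ℝ) := by
        refine add_le_add (le_trans (Finset.sum_le_sum fun l _ => row_lb l) hA) ?_
        refine mul_le_mul_of_nonneg_left (le_trans hB ?_) hγ
        rw [sum_p]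
        exact hW_rank

/-- **Hard-thresholding of singular values solves rank-regularized approximation.**
If `Y = U S Vᵀ` is a singular value decomposition of `Y` (with `U`, `V` orthogonal and `S`
rectangular-diagonal with nonincreasing nonnegative diagonal entries), then for `γ ≥ 0`
the matrix `X̂ = U φ_{hard,√γ}(S) Vᵀ`, obtained by hard-thresholding the singular values at
level `√γ`, globally minimizes `X ↦ ‖Y − X‖_F² + γ·rank X`. -/
theorem hard_thresholding_minimizes_rank_regularized {n k : ℕ}
    (U : Matrix (Fin n) (Fin n) ℝ) (V : Matrix (Fin k) (Fin k) ℝ)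
    (hU : Uᵀ * U = 1) (hU' : U * Uᵀ = 1)
    (hV : Vᵀ * V = 1) (hV' : V * Vᵀ = 1)
    (S : Matrix (Fin n) (Fin k) ℝ)
    (hSdiag : ∀ (i : Fin n) (j : Fin k), (i : ℕ) ≠ (j : ℕ) → S i j = 0)
    (hSnonneg : ∀ (i : Fin n) (j : Fin k), (i : ℕ) = (j : ℕ) → 0 ≤ S i j)
    (hSsorted : ∀ (i i' : Fin n) (j j' : Fin k), (i : ℕ) = (j : ℕ) → (i' : ℕ) = (j' : ℕ) →
      (i : ℕ) ≤ (i' : ℕ) → S i' j' ≤ S i j)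
    (γ : ℝ) (hγ : 0 ≤ γ)
    (Y : Matrix (Fin n) (Fin k) ℝ) (hY : Y = U * S * Vᵀ)
    (Xhat : Matrix (Fin n) (Fin k) ℝ)
    (hXhat : Xhat = U * (Matrix.of fun i j => if Real.sqrt γ < S i j then S i j else 0) * Vᵀ) :
    ∀ X : Matrix (Fin n) (Fin k) ℝ,
      (∑ i, ∑ j, (Y i j - Xhat i j) ^ 2) + γ * (Xhat.rank : ℝ)
        ≤ (∑ i, ∑ j, (Y i j - X i j) ^ 2) + γ * (X.rank : ℝ) := by
  intro X
  classical
  set a : Fin (min n k) → Fin n := Fin.castLE (min_le_left n k) with ha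
  set b : Fin (min n k) → Fin k := Fin.castLE (min_le_right n k) with hb
  set D : Matrix (Fin n) (Fin k) ℝ :=
    Matrix.of fun i j => if Real.sqrt γ < S i j then S i j else 0 with hD
  set Z : Matrix (Fin n) (Fin k) ℝ := Uᵀ * X * V with hZ
  -- Frobenius norm at Xhat
  have hYX : Y - Xhat = U * (S - D) * Vᵀ := by
    rw [hY, hXhat, ← Matrix.sub_mul, ← Matrix.mul_sub]
  have hfrob1 : ∑ i, ∑ j, (Y i j - Xhat i j) ^ 2 = ∑ i, ∑ j, (S i j - D i j) ^ 2 := by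
    calc ∑ i, ∑ j, (Y i j - Xhat i j) ^ 2
        = ∑ i, ∑ j, ((U * (S - D) * Vᵀ) i j) ^ 2 := by
          refine Finset.sum_congr rfl fun i _ => Finset.sum_congr rfl fun j _ => ?_
          rw [← hYX]
          rfl
      _ = ∑ i, ∑ j, ((S - D) i j) ^ 2 := frob_conj U V hU hV (S - D)
      _ = ∑ i, ∑ j, (S i j - D i j) ^ 2 := by simp [Matrix.sub_apply]
  have hdiag1 : ∑ i, ∑ j, (S i j - D i j) ^ 2
      = ∑ l : Fin (min n k),
          (if Real.sqrt γ < S (a l) (b l) then 0 else S (a l) (b l)) ^ 2 := by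
    rw [diag_double_sum (fun i j => (S i j - D i j) ^ 2)
      (fun i j hij => by show (S i j - D i j) ^ 2 = 0; simp [hD, hSdiag i j hij])]
    refine Finset.sum_congr rfl fun l _ => ?_
    congr 1
    simp only [hD, Matrix.of_apply]
    split_ifs with h <;> ring
  -- rank bound at Xhat
  set T : Finset (Fin (min n k)) :=
    Finset.univ.filter (fun l => Real.sqrt γ < S (a l) (b l)) with hT
  have hrkXhat : (Xhat.rank : ℝ) ≤ (T.card : ℝ) := by
    have h1 : Xhat.rank ≤ D.rank := by
      rw [hXhat]
      exact le_trans (Matrix.rank_mul_le_left _ _) (Matrix.rank_mul_le_right _ _)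
    have h2 := rank_thresh_le S hSdiag (Real.sqrt γ)
    exact_mod_cast le_trans h1 h2
  -- value at Xhat is the min-sum
  have hmin : ∀ l : Fin (min n k),
      (if Real.sqrt γ < S (a l) (b l) then 0 else S (a l) (b l)) ^ 2
        + (if Real.sqrt γ < S (a l) (b l) then γ else 0)
      = min (S (a l) (b l) ^ 2) γ := by
    intro l
    have hs0 : 0 ≤ S (a l) (b l) := hSnonneg _ _ rfl
    have hsq := Real.sq_sqrt hγ
    have hsqn := Real.sqrt_nonneg γ
    split_ifs with h
    · rw [min_eq_right (by nlinarith)]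
      ring
    · push_neg at h
      rw [min_eq_left (by nlinarith)]
      ring
  have LHS_bound : (∑ i, ∑ j, (Y i j - Xhat i j) ^ 2) + γ * (Xhat.rank : ℝ)
      ≤ ∑ l : Fin (min n k), min (S (a l) (b l) ^ 2) γ := by
    calc (∑ i, ∑ j, (Y i j - Xhat i j) ^ 2) + γ * (Xhat.rank : ℝ)
        ≤ (∑ l : Fin (min n k),
            (if Real.sqrt γ < S (a l) (b l) then 0 else S (a l) (b l)) ^ 2)
          + γ * (T.card : ℝ) := by
          rw [hfrob1, hdiag1]
          exact add_le_add_right (mul_le_mul_of_nonneg_left hrkXhat hγ) _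
      _ = (∑ l : Fin (min n k),
            (if Real.sqrt γ < S (a l) (b l) then 0 else S (a l) (b l)) ^ 2)
          + ∑ l : Fin (min n k), (if Real.sqrt γ < S (a l) (b l) then γ else 0) := by
          congr 1
          rw [hT, ← Finset.sum_filter, Finset.sum_const, nsmul_eq_mul, mul_comm]
      _ = ∑ l : Fin (min n k), min (S (a l) (b l) ^ 2) γ := by
          rw [← Finset.sum_add_distrib]
          exact Finset.sum_congr rfl fun l _ => hmin l
  -- the general lower bound
  have hXeq : U * (Uᵀ * X * V) * Vᵀ = X := by
    simp only [Matrix.mul_assoc]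
    rw [hV', Matrix.mul_one, ← Matrix.mul_assoc, hU', Matrix.one_mul]
  have hYX2 : Y - X = U * (S - Z) * Vᵀ := by
    rw [hY, hZ, Matrix.mul_sub, Matrix.sub_mul, hXeq]
  have hfrob2 : ∑ i, ∑ j, (Y i j - X i j) ^ 2 = ∑ i, ∑ j, (S i j - Z i j) ^ 2 := by
    calc ∑ i, ∑ j, (Y i j - X i j) ^ 2
        = ∑ i, ∑ j, ((U * (S - Z) * Vᵀ) i j) ^ 2 := by
          refine Finset.sum_congr rfl fun i _ => Finset.sum_congr rfl fun j _ => ?_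
          rw [← hYX2]
          rfl
      _ = ∑ i, ∑ j, ((S - Z) i j) ^ 2 := frob_conj U V hU hV (S - Z)
      _ = ∑ i, ∑ j, (S i j - Z i j) ^ 2 := by simp [Matrix.sub_apply]
  have hrkZ : (Z.rank : ℝ) ≤ (X.rank : ℝ) := by
    have : Z.rank ≤ X.rank := by
      rw [hZ]
      exact le_trans (Matrix.rank_mul_le_left _ _) (Matrix.rank_mul_le_right _ _)
    exact_mod_cast this
  calc (∑ i, ∑ j, (Y i j - Xhat i j) ^ 2) + γ * (Xhat.rank : ℝ)
      ≤ ∑ l : Fin (min n k), min (S (a l) (b l) ^ 2) γ := LHS_bound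
    _ ≤ (∑ i, ∑ j, (S i j - Z i j) ^ 2) + γ * (Z.rank : ℝ) := key_lb S Z hSdiag γ hγ
    _ ≤ (∑ i, ∑ j, (Y i j - X i j) ^ 2) + γ * (X.rank : ℝ) := by
        rw [hfrob2]
        exact add_le_add_right (mul_le_mul_of_nonneg_left hrkZ hγ) _
end

section
/- (Soft-thresholding of singular values solves nuclear norm minimization.) Let Y ∈ ℝ^{n×k} have a singular value decomposition Y = U S Vᵀ, where U ∈ ℝ^{n×n} and V ∈ ℝ^{k×k} are orthogonal matrices and S ∈ ℝ^{n×k} has S_{ij} = 0 for i ≠ j and nonnegative diagonal entries s₁ ≥ s₂ ≥ … ≥ s_{min(n,k)} ≥ 0. Let γ ≥ 0 and let φ_{soft,γ}(S) denote the matrix obtained from S by replacing each diagonal entry s_i by max(s_i − γ, 0). Then X̂ = U φ_{soft,γ}(S) Vᵀ is a global minimizer over X ∈ ℝ^{n×k} of the objective (1/2) ‖Y − X‖_F² + γ ‖X‖_*, where ‖X‖_* = trace of the positive semidefinite square root of XᵀX is the nuclear norm (the sum of the singular values of X). -/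
open Matrix

/-- The nuclear norm of a real matrix `X`: the trace of the positive semidefinite square
root of `Xᵀ X` (equivalently, the sum of the singular values of `X`). -/
noncomputable def nuclearNorm {n k : ℕ} (X : Matrix (Fin n) (Fin k) ℝ) : ℝ :=
  (let hA : (Xᵀ * X).PosSemidef :=
      (by simpa using Matrix.posSemidef_conjTranspose_mul_self X);
    (hA.1.eigenvectorUnitary : Matrix (Fin k) (Fin k) ℝ) *
      diagonal ((RCLike.ofReal : ℝ → ℝ) ∘ (Real.sqrt ∘ hA.1.eigenvalues)) *
      (star hA.1.eigenvectorUnitary : Matrix (Fin k) (Fin k) ℝ)).trace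

noncomputable def Matrix.PosSemidef.sqrt {m : ℕ} {A : Matrix (Fin m) (Fin m) ℝ} (hA : A.PosSemidef) :
    Matrix (Fin m) (Fin m) ℝ :=
  (hA.1.eigenvectorUnitary : Matrix (Fin m) (Fin m) ℝ) *
    diagonal ((RCLike.ofReal : ℝ → ℝ) ∘ (Real.sqrt ∘ hA.1.eigenvalues)) *
    (star hA.1.eigenvectorUnitary : Matrix (Fin m) (Fin m) ℝ)

open scoped MatrixOrder in
lemma Matrix.PosSemidef.sqrt_eq_cfcSqrt {m : ℕ} {A : Matrix (Fin m) (Fin m) ℝ} (hA : A.PosSemidef) :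
    hA.sqrt = CFC.sqrt A := by
  rw [CFC.sqrt_eq_cfc, cfc_nnreal_eq_real _ A, hA.1.cfc_eq, IsHermitian.cfc,
    Unitary.conjStarAlgAut_apply, Matrix.PosSemidef.sqrt]
  congr 3
  funext i
  simp [Real.coe_sqrt, Real.coe_toNNReal', max_eq_left (hA.eigenvalues_nonneg i)]

open scoped MatrixOrder in
lemma Matrix.PosSemidef.posSemidef_sqrt {m : ℕ} {A : Matrix (Fin m) (Fin m) ℝ} (hA : A.PosSemidef) :
    hA.sqrt.PosSemidef := by
  rw [hA.sqrt_eq_cfcSqrt, ← nonneg_iff_posSemidef]; exact CFC.sqrt_nonneg A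

open scoped MatrixOrder in
lemma Matrix.PosSemidef.sqrt_mul_self {m : ℕ} {A : Matrix (Fin m) (Fin m) ℝ} (hA : A.PosSemidef) :
    hA.sqrt * hA.sqrt = A := by
  rw [hA.sqrt_eq_cfcSqrt]; exact CFC.sqrt_mul_sqrt_self A (nonneg_iff_posSemidef.mpr hA)

open scoped MatrixOrder in
lemma Matrix.PosSemidef.eq_sqrt_of_sq_eq {m : ℕ} {A B : Matrix (Fin m) (Fin m) ℝ} (hB : B.PosSemidef)
    (hA : A.PosSemidef) (hsq : B ^ 2 = A) : B = hA.sqrt := by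
  rw [hA.sqrt_eq_cfcSqrt]
  exact (CFC.sqrt_unique (by rw [← sq]; exact hsq) (nonneg_iff_posSemidef.mpr hB)).symm

lemma nuclearNorm_eq {n k : ℕ} (Z : Matrix (Fin n) (Fin k) ℝ) (h : (Zᵀ * Z).PosSemidef) :
    nuclearNorm Z = h.sqrt.trace := rfl

lemma trace_sqrt_eq {m : ℕ} {A : Matrix (Fin m) (Fin m) ℝ} (hA : A.PosSemidef) :
    hA.sqrt.trace = ∑ j, Real.sqrt (hA.1.eigenvalues j) := by
  rw [Matrix.PosSemidef.sqrt, Matrix.trace_mul_cycle]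
  rw [Unitary.coe_star_mul_self, Matrix.one_mul, Matrix.trace_diagonal]
  simp

/-- Frobenius inner product squared norm as a trace. -/
lemma frob_eq {n k : ℕ} (A : Matrix (Fin n) (Fin k) ℝ) :
    ∑ i, ∑ j, A i j ^ 2 = (Aᵀ * A).trace := by
  simp only [Matrix.trace, Matrix.diag, Matrix.mul_apply, Matrix.transpose_apply, pow_two]
  rw [Finset.sum_comm]

/-- Cauchy–Schwarz with square roots. -/
lemma cs_sqrt {n : ℕ} (f g : Fin n → ℝ) :
    ∑ i, f i * g i ≤ Real.sqrt (∑ i, f i ^ 2) * Real.sqrt (∑ i, g i ^ 2) := by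
  have h := Finset.sum_mul_sq_le_sq_mul_sq Finset.univ f g
  calc ∑ i, f i * g i ≤ |∑ i, f i * g i| := le_abs_self _
    _ = Real.sqrt ((∑ i, f i * g i) ^ 2) := (Real.sqrt_sq_eq_abs _).symm
    _ ≤ Real.sqrt ((∑ i, f i ^ 2) * ∑ i, g i ^ 2) := Real.sqrt_le_sqrt h
    _ = _ := Real.sqrt_mul (by positivity) _

/-- Bound on `‖G *ᵥ c‖²` for a rectangular-diagonal `G` with entries bounded by `γ`. -/
lemma col_bound {n k : ℕ} (γ : ℝ) (G : Matrix (Fin n) (Fin k) ℝ)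
    (hGd : ∀ (i : Fin n) (j : Fin k), (i : ℕ) ≠ (j : ℕ) → G i j = 0)
    (hGb : ∀ (i : Fin n) (j : Fin k), |G i j| ≤ γ)
    (c : Fin k → ℝ) :
    ∑ i, (∑ l, G i l * c l) ^ 2 ≤ γ ^ 2 * ∑ l, c l ^ 2 := by
  have step1 : ∀ i : Fin n,
      (∑ l, G i l * c l) ^ 2 ≤ γ ^ 2 * (∑ l : Fin k, if (l : ℕ) = (i : ℕ) then c l ^ 2 else 0) := by
    intro i
    by_cases h : (i : ℕ) < k
    · set l₀ : Fin k := ⟨i, h⟩ with hl₀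
      have h1 : ∑ l, G i l * c l = G i l₀ * c l₀ := by
        refine Finset.sum_eq_single l₀ (fun l _ hne => ?_) (fun h => absurd (Finset.mem_univ _) h)
        rw [hGd i l (fun he => hne (by ext; simpa using he.symm)), zero_mul]
      have h2 : (∑ l : Fin k, if (l : ℕ) = (i : ℕ) then c l ^ 2 else 0) = c l₀ ^ 2 := by
        refine (Finset.sum_eq_single l₀ (fun l _ hne => ?_)
          (fun h => absurd (Finset.mem_univ _) h)).trans (by simp [hl₀])
        exact if_neg (fun he => hne (by ext; simpa using he))
      rw [h1, h2, mul_pow]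
      have hb := hGb i l₀
      have : G i l₀ ^ 2 ≤ γ ^ 2 := by
        rw [← sq_abs]; exact pow_le_pow_left₀ (abs_nonneg _) hb 2
      nlinarith [sq_nonneg (c l₀)]
    · have h1 : ∑ l, G i l * c l = 0 := by
        refine Finset.sum_eq_zero fun l _ => ?_
        rw [hGd i l (by omega), zero_mul]
      rw [h1]
      have h0 : (0:ℝ) ≤ ∑ l : Fin k, if (l : ℕ) = (i : ℕ) then c l ^ 2 else 0 :=
        Finset.sum_nonneg fun l _ => by positivity
      simpa using mul_nonneg (sq_nonneg γ) h0
  have step2 : ∀ l : Fin k, (∑ i : Fin n, if (l : ℕ) = (i : ℕ) then c l ^ 2 else 0) ≤ c l ^ 2 := by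
    intro l
    by_cases h : (l : ℕ) < n
    · have heq : (∑ i : Fin n, if (l : ℕ) = (i : ℕ) then c l ^ 2 else 0) = c l ^ 2 := by
        refine (Finset.sum_eq_single (⟨l, h⟩ : Fin n) (fun i _ hne => ?_)
          (fun h => absurd (Finset.mem_univ _) h)).trans (by simp)
        exact if_neg (fun he => hne (by ext; simpa using he.symm))
      rw [heq]
    · have : (∑ i : Fin n, if (l : ℕ) = (i : ℕ) then c l ^ 2 else 0) = 0 :=
        Finset.sum_eq_zero fun i _ => if_neg (by omega)
      rw [this]; positivity
  calc ∑ i : Fin n, (∑ l : Fin k, G i l * c l) ^ 2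
      ≤ ∑ i : Fin n, γ ^ 2 * (∑ l : Fin k, if (l : ℕ) = (i : ℕ) then c l ^ 2 else 0) :=
        Finset.sum_le_sum fun i _ => step1 i
    _ = γ ^ 2 * ∑ l : Fin k, (∑ i : Fin n, if (l : ℕ) = (i : ℕ) then c l ^ 2 else 0) := by
        rw [← Finset.mul_sum, Finset.sum_comm]
    _ ≤ γ ^ 2 * ∑ l : Fin k, c l ^ 2 := by
        refine mul_le_mul_of_nonneg_left (Finset.sum_le_sum fun l _ => step2 l) (by positivity)

lemma trace_transpose_mul_eq {n k : ℕ} (A B : Matrix (Fin n) (Fin k) ℝ) :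
    (Aᵀ * B).trace = ∑ j, ∑ i, A i j * B i j := by
  simp [Matrix.trace, Matrix.diag, Matrix.mul_apply, Matrix.transpose_apply]

/-- Key dual bound: `tr (Gᵀ Z) ≤ γ ‖Z‖₊` for rectangular-diagonal `G` with `|Gᵢⱼ| ≤ γ`. -/
lemma trace_le_nuclear {n k : ℕ} (γ : ℝ) (hγ : 0 ≤ γ) (G Z : Matrix (Fin n) (Fin k) ℝ)
    (hGd : ∀ (i : Fin n) (j : Fin k), (i : ℕ) ≠ (j : ℕ) → G i j = 0)
    (hGb : ∀ (i : Fin n) (j : Fin k), |G i j| ≤ γ) :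
    (Gᵀ * Z).trace ≤ γ * nuclearNorm Z := by
  have hPSD : (Zᵀ * Z).PosSemidef := Matrix.posSemidef_conjTranspose_mul_self Z
  have hH : (Zᵀ * Z).IsHermitian := hPSD.1
  set W : Matrix (Fin k) (Fin k) ℝ := (hH.eigenvectorUnitary : Matrix (Fin k) (Fin k) ℝ) with hWdef
  have hstar : star W = Wᵀ := by
    ext i j
    simp [Matrix.star_apply]
  have hWW : Wᵀ * W = 1 := by rw [← hstar]; exact Unitary.coe_star_mul_self _
  have hWW' : W * Wᵀ = 1 := by rw [← hstar]; exact Unitary.coe_mul_star_self _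
  have hdiag : Wᵀ * (Zᵀ * Z) * W = Matrix.diagonal hH.eigenvalues := by
    have h := hH.conjStarAlgAut_star_eigenvectorUnitary
    rw [Unitary.conjStarAlgAut_apply, Unitary.coe_star, star_star, hstar] at h
    rw [h]
    rfl
  have ht : (Gᵀ * Z).trace = ((G * W)ᵀ * (Z * W)).trace := by
    have h1 : (G * W)ᵀ * (Z * W) = Wᵀ * (Gᵀ * Z) * W := by
      rw [Matrix.transpose_mul]
      simp [Matrix.mul_assoc]
    rw [h1, Matrix.trace_mul_cycle, ← Matrix.mul_assoc, hWW', Matrix.one_mul]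
  have hZcol : ∀ j, (∑ i, ((Z * W) i j) ^ 2) = hH.eigenvalues j := by
    intro j
    have h2 : (Z * W)ᵀ * (Z * W) = Wᵀ * (Zᵀ * Z) * W := by
      rw [Matrix.transpose_mul]
      simp [Matrix.mul_assoc]
    have h1 : ((Z * W)ᵀ * (Z * W)) j j = hH.eigenvalues j := by
      rw [h2, hdiag]
      simp
    rw [← h1]
    simp [Matrix.mul_apply, Matrix.transpose_apply, pow_two, mul_comm]
  have hZcol' : ∀ j, 0 ≤ hH.eigenvalues j := by
    intro j
    rw [← hZcol j]
    positivity
  have hGcol : ∀ j, (∑ i, ((G * W) i j) ^ 2) ≤ γ ^ 2 := by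
    intro j
    have hc : (∑ l, (W l j) ^ 2) = 1 := by
      have h1 : (Wᵀ * W) j j = 1 := by rw [hWW]; simp
      rw [← h1]
      simp [Matrix.mul_apply, Matrix.transpose_apply, pow_two]
    calc (∑ i, ((G * W) i j) ^ 2) = ∑ i, (∑ l, G i l * W l j) ^ 2 := by
          simp [Matrix.mul_apply]
      _ ≤ γ ^ 2 * ∑ l, (W l j) ^ 2 := col_bound γ G hGd hGb (fun l => W l j)
      _ = γ ^ 2 := by rw [hc, mul_one]
  calc (Gᵀ * Z).trace = ∑ j, ∑ i, (G * W) i j * (Z * W) i j := by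
        rw [ht, trace_transpose_mul_eq]
    _ ≤ ∑ j, Real.sqrt (∑ i, ((G * W) i j) ^ 2) * Real.sqrt (∑ i, ((Z * W) i j) ^ 2) :=
        Finset.sum_le_sum fun j _ => cs_sqrt _ _
    _ ≤ ∑ j, γ * Real.sqrt (hH.eigenvalues j) := by
        refine Finset.sum_le_sum fun j _ => ?_
        rw [hZcol j]
        refine mul_le_mul_of_nonneg_right ?_ (Real.sqrt_nonneg _)
        calc Real.sqrt (∑ i, ((G * W) i j) ^ 2) ≤ Real.sqrt (γ ^ 2) :=
              Real.sqrt_le_sqrt (hGcol j)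
          _ = γ := Real.sqrt_sq hγ
    _ = γ * nuclearNorm Z := by
        rw [← Finset.mul_sum, nuclearNorm_eq Z hPSD, trace_sqrt_eq hPSD]

lemma nuclearNorm_conj {n k : ℕ} (U : Matrix (Fin n) (Fin n) ℝ) (V : Matrix (Fin k) (Fin k) ℝ)
    (hU : Uᵀ * U = 1) (hV : Vᵀ * V = 1) (A : Matrix (Fin n) (Fin k) ℝ) :
    nuclearNorm (U * A * Vᵀ) = nuclearNorm A := by
  have hA : (Aᵀ * A).PosSemidef := Matrix.posSemidef_conjTranspose_mul_self A
  have hUX : ∀ X : Matrix (Fin n) (Fin k) ℝ, Uᵀ * (U * X) = X := fun X => by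
    rw [← Matrix.mul_assoc, hU, Matrix.one_mul]
  have hVX : ∀ X : Matrix (Fin k) (Fin k) ℝ, Vᵀ * (V * X) = X := fun X => by
    rw [← Matrix.mul_assoc, hV, Matrix.one_mul]
  have h1 : (U * A * Vᵀ)ᵀ * (U * A * Vᵀ) = V * (Aᵀ * A) * Vᵀ := by
    simp only [Matrix.transpose_mul, Matrix.transpose_transpose, Matrix.mul_assoc, hUX]
  have hCT : Vᴴ = Vᵀ := by ext i j; simp
  have hBpsd : (V * hA.sqrt * Vᵀ).PosSemidef := by
    rw [← hCT]; exact hA.posSemidef_sqrt.mul_mul_conjTranspose_same V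
  have hPSD2 : ((U * A * Vᵀ)ᵀ * (U * A * Vᵀ)).PosSemidef :=
    Matrix.posSemidef_conjTranspose_mul_self _
  have hsq : (V * hA.sqrt * Vᵀ) ^ 2 = (U * A * Vᵀ)ᵀ * (U * A * Vᵀ) := by
    rw [h1, pow_two]
    have hs : hA.sqrt * (hA.sqrt * Vᵀ) = Aᵀ * (A * Vᵀ) := by
      rw [← Matrix.mul_assoc, hA.sqrt_mul_self, Matrix.mul_assoc]
    simp only [Matrix.mul_assoc, hVX, hs]
  rw [nuclearNorm_eq _ hPSD2, ← hBpsd.eq_sqrt_of_sq_eq hPSD2 hsq,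
    Matrix.trace_mul_cycle, hV, Matrix.one_mul, nuclearNorm_eq A hA]

lemma nuclearNorm_diag {n k : ℕ} (D : Matrix (Fin n) (Fin k) ℝ)
    (hDd : ∀ (i : Fin n) (j : Fin k), (i : ℕ) ≠ (j : ℕ) → D i j = 0)
    (hDn : ∀ (i : Fin n) (j : Fin k), 0 ≤ D i j) :
    nuclearNorm D = ∑ j, ∑ i, D i j := by
  have hcol : ∀ j : Fin k, (∑ i, D i j) * (∑ i, D i j) = ∑ i, D i j * D i j := by
    intro j
    by_cases h : (j : ℕ) < n
    · have h1 : (∑ i, D i j) = D ⟨j, h⟩ j :=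
        Finset.sum_eq_single ⟨j, h⟩
          (fun i _ hne => hDd i j (fun he => hne (by ext; simpa using he)))
          (fun h => absurd (Finset.mem_univ _) h)
      have h2 : (∑ i, D i j * D i j) = D ⟨j, h⟩ j * D ⟨j, h⟩ j :=
        Finset.sum_eq_single (⟨j, h⟩ : Fin n)
          (fun i _ hne => by rw [hDd i j (fun he => hne (by ext; simpa using he)), zero_mul])
          (fun h => absurd (Finset.mem_univ _) h)
      rw [h1, h2]
    · have hz : ∀ i : Fin n, D i j = 0 := fun i => hDd i j (by omega)
      simp [hz]
  have hDD : Dᵀ * D = Matrix.diagonal (fun j => ∑ i, D i j * D i j) := by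
    ext j j'
    by_cases h : j = j'
    · subst h
      simp [Matrix.mul_apply, Matrix.transpose_apply]
    · rw [Matrix.diagonal_apply_ne _ h]
      rw [Matrix.mul_apply]
      refine Finset.sum_eq_zero fun i _ => ?_
      rw [Matrix.transpose_apply]
      by_cases hij : (i : ℕ) = (j : ℕ)
      · rw [hDd i j' (fun he => h (by ext; omega)), mul_zero]
      · rw [hDd i j hij, zero_mul]
  have hB : (Matrix.diagonal (fun j => ∑ i, D i j)).PosSemidef :=
    Matrix.posSemidef_diagonal_iff.mpr fun j => Finset.sum_nonneg fun i _ => hDn i j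
  have hPSD : (Dᵀ * D).PosSemidef := Matrix.posSemidef_conjTranspose_mul_self D
  have hsq : (Matrix.diagonal (fun j => ∑ i, D i j)) ^ 2 = Dᵀ * D := by
    rw [pow_two, Matrix.diagonal_mul_diagonal, hDD]
    exact congrArg Matrix.diagonal (funext hcol)
  rw [nuclearNorm_eq D hPSD, ← hB.eq_sqrt_of_sq_eq hPSD hsq, Matrix.trace_diagonal]

lemma trace_sub_expand {n k : ℕ} (A B : Matrix (Fin n) (Fin k) ℝ) :
    ((A - B)ᵀ * (A - B)).trace = (Aᵀ * A).trace - 2 * (Aᵀ * B).trace + (Bᵀ * B).trace := by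
  have hEG : (Bᵀ * A).trace = (Aᵀ * B).trace := by
    calc (Bᵀ * A).trace = ((Bᵀ * A)ᵀ).trace := (Matrix.trace_transpose _).symm
      _ = (Aᵀ * B).trace := by rw [Matrix.transpose_mul, Matrix.transpose_transpose]
  rw [Matrix.transpose_sub, Matrix.sub_mul, Matrix.mul_sub, Matrix.mul_sub,
    Matrix.trace_sub, Matrix.trace_sub, Matrix.trace_sub, hEG]
  ring

/-- **Soft-thresholding of singular values solves nuclear norm minimization.**
If `Y = U S Vᵀ` is a singular value decomposition of `Y` (with `U`, `V` orthogonal and `S`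
rectangular-diagonal with nonincreasing nonnegative diagonal entries), then for `γ ≥ 0`
the matrix `X̂ = U φ_{soft,γ}(S) Vᵀ`, obtained by soft-thresholding the singular values at
level `γ`, globally minimizes `X ↦ (1/2)‖Y − X‖_F² + γ‖X‖_*`. -/
theorem soft_thresholding_minimizes_nuclear_norm_problem {n k : ℕ}
    (U : Matrix (Fin n) (Fin n) ℝ) (V : Matrix (Fin k) (Fin k) ℝ)
    (hU : Uᵀ * U = 1) (hU' : U * Uᵀ = 1)
    (hV : Vᵀ * V = 1) (hV' : V * Vᵀ = 1)
    (S : Matrix (Fin n) (Fin k) ℝ)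
    (hSdiag : ∀ (i : Fin n) (j : Fin k), (i : ℕ) ≠ (j : ℕ) → S i j = 0)
    (hSnonneg : ∀ (i : Fin n) (j : Fin k), (i : ℕ) = (j : ℕ) → 0 ≤ S i j)
    (hSsorted : ∀ (i i' : Fin n) (j j' : Fin k), (i : ℕ) = (j : ℕ) → (i' : ℕ) = (j' : ℕ) →
      (i : ℕ) ≤ (i' : ℕ) → S i' j' ≤ S i j)
    (γ : ℝ) (hγ : 0 ≤ γ)
    (Y : Matrix (Fin n) (Fin k) ℝ) (hY : Y = U * S * Vᵀ)
    (Xhat : Matrix (Fin n) (Fin k) ℝ)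
    (hXhat : Xhat = U * (Matrix.of fun i j => max (S i j - γ) 0) * Vᵀ) :
    ∀ X : Matrix (Fin n) (Fin k) ℝ,
      (1 / 2) * (∑ i, ∑ j, (Y i j - Xhat i j) ^ 2) + γ * nuclearNorm Xhat
        ≤ (1 / 2) * (∑ i, ∑ j, (Y i j - X i j) ^ 2) + γ * nuclearNorm X := by
  intro X
  set D : Matrix (Fin n) (Fin k) ℝ := Matrix.of fun i j => max (S i j - γ) 0 with hDdef
  set Z : Matrix (Fin n) (Fin k) ℝ := Uᵀ * X * V with hZdef
  have hX : X = U * Z * Vᵀ := by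
    have h : U * (Uᵀ * X * V) * Vᵀ = (U * Uᵀ) * X * (V * Vᵀ) := by
      simp only [Matrix.mul_assoc]
    rw [hZdef, h, hU', hV', Matrix.one_mul, Matrix.mul_one]
  have hDd : ∀ (i : Fin n) (j : Fin k), (i : ℕ) ≠ (j : ℕ) → D i j = 0 := by
    intro i j hij
    simp only [hDdef, Matrix.of_apply]
    rw [hSdiag i j hij, zero_sub]
    exact max_eq_right (neg_nonpos.mpr hγ)
  have hDn : ∀ (i : Fin n) (j : Fin k), 0 ≤ D i j := fun i j => le_max_right _ _
  set G : Matrix (Fin n) (Fin k) ℝ := S - D with hGdef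
  set E : Matrix (Fin n) (Fin k) ℝ := Z - D with hEdef
  have hGd : ∀ (i : Fin n) (j : Fin k), (i : ℕ) ≠ (j : ℕ) → G i j = 0 := by
    intro i j hij
    rw [hGdef, Matrix.sub_apply, hSdiag i j hij, hDd i j hij, sub_zero]
  have hGb : ∀ (i : Fin n) (j : Fin k), |G i j| ≤ γ := by
    intro i j
    by_cases hij : (i : ℕ) = (j : ℕ)
    · have hs := hSnonneg i j hij
      rw [hGdef, Matrix.sub_apply]
      simp only [hDdef, Matrix.of_apply]
      rcases le_total (S i j) γ with h | h
      · rw [max_eq_right (by linarith), sub_zero, abs_of_nonneg hs]; exact h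
      · rw [max_eq_left (by linarith), show S i j - (S i j - γ) = γ by ring,
          abs_of_nonneg hγ]
    · rw [hGd i j hij, abs_zero]; exact hγ
  have hGD : (Gᵀ * D).trace = γ * nuclearNorm D := by
    rw [trace_transpose_mul_eq, nuclearNorm_diag D hDd hDn, Finset.mul_sum]
    refine Finset.sum_congr rfl fun j _ => ?_
    rw [Finset.mul_sum]
    refine Finset.sum_congr rfl fun i _ => ?_
    by_cases hij : (i : ℕ) = (j : ℕ)
    · rw [hGdef, Matrix.sub_apply]
      simp only [hDdef, Matrix.of_apply]
      rcases max_cases (S i j - γ) 0 with ⟨h1, h2⟩ | ⟨h1, h2⟩ <;> rw [h1] <;> ring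
    · rw [hDd i j hij, mul_zero, mul_zero]
  have hGZ : (Gᵀ * Z).trace ≤ γ * nuclearNorm Z := trace_le_nuclear γ hγ G Z hGd hGb
  have hYX : Y - X = U * (S - Z) * Vᵀ := by
    rw [hY, hX, ← Matrix.sub_mul, ← Matrix.mul_sub]
  have hYXhat : Y - Xhat = U * (S - D) * Vᵀ := by
    rw [hY, hXhat, ← Matrix.sub_mul, ← Matrix.mul_sub]
  have hNXhat : nuclearNorm Xhat = nuclearNorm D := by
    rw [hXhat]; exact nuclearNorm_conj U V hU hV D
  have hNX : nuclearNorm X = nuclearNorm Z := by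
    rw [hX]; exact nuclearNorm_conj U V hU hV Z
  have hF1 : ∑ i, ∑ j, (Y i j - Xhat i j) ^ 2 = ∑ i, ∑ j, (S - D) i j ^ 2 := by
    calc ∑ i, ∑ j, (Y i j - Xhat i j) ^ 2 = ∑ i, ∑ j, ((Y - Xhat) i j) ^ 2 := by
          simp only [Matrix.sub_apply]
      _ = ∑ i, ∑ j, (S - D) i j ^ 2 := by rw [hYXhat]; exact frob_conj U V hU hV _
  have hF2 : ∑ i, ∑ j, (Y i j - X i j) ^ 2 = ∑ i, ∑ j, (S - Z) i j ^ 2 := by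
    calc ∑ i, ∑ j, (Y i j - X i j) ^ 2 = ∑ i, ∑ j, ((Y - X) i j) ^ 2 := by
          simp only [Matrix.sub_apply]
      _ = ∑ i, ∑ j, (S - Z) i j ^ 2 := by rw [hYX]; exact frob_conj U V hU hV _
  rw [hF1, hF2, hNXhat, hNX]
  have hSZ : S - Z = G - E := by rw [hGdef, hEdef]; abel
  have htr : ((G - E)ᵀ * (G - E)).trace
      = (Gᵀ * G).trace - 2 * (Gᵀ * E).trace + (Eᵀ * E).trace := trace_sub_expand G E
  have hE2 : 0 ≤ (Eᵀ * E).trace := by rw [← frob_eq]; positivity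
  have hGE : (Gᵀ * E).trace = (Gᵀ * Z).trace - γ * nuclearNorm D := by
    rw [hEdef, Matrix.mul_sub, Matrix.trace_sub, hGD]
  have hlhs : ∑ i, ∑ j, (S - D) i j ^ 2 = (Gᵀ * G).trace := by
    rw [frob_eq, hGdef]
  have hrhs : ∑ i, ∑ j, (S - Z) i j ^ 2
      = (Gᵀ * G).trace - 2 * (Gᵀ * E).trace + (Eᵀ * E).trace := by
    rw [hSZ] at *
    rw [frob_eq, htr]
  rw [hlhs, hrhs]
  linarith [hGZ, hE2, hGE]
end

section
/- (OWF upper bound on the risk of a convex-combination denoiser.) Fix x ∈ ℝⁿ, σ > 0, and an index c ∈ {1, …, n}. Let ε : Ω → ℝⁿ be a random vector with E[ε] = 0 and E[ε_i ε_j] = σ² δ_{ij} for all i, j, and set y = x + ε. Let v ∈ ℝⁿ be the vector with entries v_i = |x_i − x_c|, and define the symmetric positive definite matrix Q = v vᵀ + σ² Iₙ. Then for every θ ∈ ℝⁿ with 𝟙ₙᵀ θ = 1 and θ ⪰ 0 (all entries nonnegative), the quadratic risk of the convex-combination estimator f_θ(y) = θᵀ y satisfies E[(θᵀ y − x_c)²]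 ≤ θᵀ Q θ. -/
open MeasureTheory Matrix

/-- **OWF upper bound on the risk of a convex-combination denoiser.**
Let `y = x + ε` with `E[ε] = 0` and `E[ε_i ε_j] = σ² δ_{ij}`, let `v_i = |x_i − x_c|` and
`Q = v vᵀ + σ² Iₙ`. For any convex weights `θ` (nonnegative, summing to one), the quadratic
risk of the estimator `θᵀ y` of the pixel `x_c` satisfies `E[(θᵀy − x_c)²] ≤ θᵀ Q θ`. -/
theorem owf_risk_upper_bound {Ω : Type*} [MeasurableSpace Ω]
    (P : Measure Ω) [IsProbabilityMeasure P] {n : ℕ}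
    (x : Fin n → ℝ) (σ : ℝ) (hσ : 0 < σ) (c : Fin n)
    (ε : Ω → Fin n → ℝ) (hε : Measurable ε)
    (hint1 : ∀ i, Integrable (fun ω => ε ω i) P)
    (hint2 : ∀ i j, Integrable (fun ω => ε ω i * ε ω j) P)
    (hmean : ∀ i, ∫ ω, ε ω i ∂P = 0)
    (hcov : ∀ i j, ∫ ω, ε ω i * ε ω j ∂P = if i = j then σ ^ 2 else 0)
    (Q : Matrix (Fin n) (Fin n) ℝ)
    (hQ : Q = Matrix.of fun i j =>
      |x i - x c| * |x j - x c| + if i = j then σ ^ 2 else 0) :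
    ∀ θ : Fin n → ℝ, ∑ i, θ i = 1 → (∀ i, 0 ≤ θ i) →
      ∫ ω, ((∑ i, θ i * (x i + ε ω i)) - x c) ^ 2 ∂P ≤ θ ⬝ᵥ Q.mulVec θ := by
  intro θ hsum hpos
  set b : ℝ := ∑ i, θ i * (x i - x c) with hbdef
  set e : Ω → ℝ := fun ω => ∑ i, θ i * ε ω i with hedef
  -- rewrite the integrand
  have hrw : ∀ ω, ((∑ i, θ i * (x i + ε ω i)) - x c) ^ 2
      = b ^ 2 + (2 * b) * e ω + e ω ^ 2 := by
    intro ω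
    have h1 : (∑ i, θ i * (x i + ε ω i)) - x c = b + e ω := by
      have : ∑ i, θ i * (x i + ε ω i) = (∑ i, θ i * (x i - x c)) + (∑ i, θ i) * x c
          + ∑ i, θ i * ε ω i := by
        rw [Finset.sum_mul, ← Finset.sum_add_distrib, ← Finset.sum_add_distrib]
        exact Finset.sum_congr rfl fun i _ => by ring
      rw [this, hsum]; ring
    rw [h1]; ring
  -- integrability
  have he_int : Integrable e P :=
    integrable_finset_sum _ fun i _ => (hint1 i).const_mul _
  have he2_eq : (fun ω => e ω ^ 2)
      = fun ω => ∑ i, ∑ j, (θ i * θ j) * (ε ω i * ε ω j) := by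
    funext ω
    simp only [hedef, sq, Finset.sum_mul_sum]
    exact Finset.sum_congr rfl fun i _ => Finset.sum_congr rfl fun j _ => by ring
  have he2_int : Integrable (fun ω => e ω ^ 2) P := by
    rw [he2_eq]
    exact integrable_finset_sum _ fun i _ =>
      integrable_finset_sum _ fun j _ => (hint2 i j).const_mul _
  -- integral of e
  have he_val : ∫ ω, e ω ∂P = 0 := by
    rw [hedef, integral_finset_sum _ fun i _ => (hint1 i).const_mul _]
    simp [integral_const_mul, hmean]
  -- integral of e²
  have he2_val : ∫ ω, e ω ^ 2 ∂P = σ ^ 2 * ∑ i, θ i ^ 2 := by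
    rw [he2_eq, integral_finset_sum _ fun i _ =>
      integrable_finset_sum _ fun j _ => (hint2 i j).const_mul _]
    have : ∀ i ∈ Finset.univ, (∫ ω, ∑ j, (θ i * θ j) * (ε ω i * ε ω j) ∂P)
        = θ i ^ 2 * σ ^ 2 := by
      intro i _
      rw [integral_finset_sum _ fun j _ => (hint2 i j).const_mul _]
      have : ∀ j ∈ Finset.univ, (∫ ω, (θ i * θ j) * (ε ω i * ε ω j) ∂P)
          = (θ i * θ j) * if i = j then σ ^ 2 else 0 := by
        intro j _
        rw [integral_const_mul, hcov]
      rw [Finset.sum_congr rfl this]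
      simp [mul_ite, mul_zero, Finset.sum_ite_eq, sq]
    rw [Finset.sum_congr rfl this, ← Finset.sum_mul]
    ring
  -- the integral value
  have hI : ∫ ω, ((∑ i, θ i * (x i + ε ω i)) - x c) ^ 2 ∂P
      = b ^ 2 + σ ^ 2 * ∑ i, θ i ^ 2 := by
    simp_rw [hrw]
    have hB : Integrable (fun _ : Ω => b ^ 2) P := integrable_const _
    have hC : Integrable (fun ω => 2 * b * e ω) P := he_int.const_mul _
    have hA : Integrable (fun ω => b ^ 2 + 2 * b * e ω) P := hB.add hC
    rw [integral_add hA he2_int, integral_add hB hC,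
      integral_const, integral_const_mul, he_val, he2_val]
    simp
  rw [hI]
  -- the RHS value
  have hRHS : θ ⬝ᵥ Q.mulVec θ
      = (∑ i, θ i * |x i - x c|) ^ 2 + σ ^ 2 * ∑ i, θ i ^ 2 := by
    subst hQ
    simp only [dotProduct, mulVec, dotProduct, Matrix.of_apply]
    have h1 : ∀ i ∈ Finset.univ, θ i * ∑ j, (|x i - x c| * |x j - x c|
        + if i = j then σ ^ 2 else 0) * θ j
        = (∑ j, (θ i * |x i - x c|) * (θ j * |x j - x c|)) + θ i ^ 2 * σ ^ 2 := by
      intro i _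
      rw [Finset.mul_sum]
      have : ∀ j ∈ Finset.univ, θ i * ((|x i - x c| * |x j - x c|
          + if i = j then σ ^ 2 else 0) * θ j)
          = (θ i * |x i - x c|) * (θ j * |x j - x c|)
            + (if i = j then θ i * θ j * σ ^ 2 else 0) := by
        intro j _
        split_ifs <;> ring
      rw [Finset.sum_congr rfl this, Finset.sum_add_distrib,
        Finset.sum_ite_eq Finset.univ i (fun j => θ i * θ j * σ ^ 2)]
      simp [sq]
    rw [Finset.sum_congr rfl h1, Finset.sum_add_distrib, ← Finset.sum_mul_sum,
      ← sq]
    rw [← Finset.sum_mul]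
    ring
  rw [hRHS]
  -- conclude: b² ≤ (∑ θ v)²
  have hb_le : |b| ≤ ∑ i, θ i * |x i - x c| := by
    refine (Finset.abs_sum_le_sum_abs _ _).trans_eq ?_
    exact Finset.sum_congr rfl fun i _ => by
      rw [abs_mul, abs_of_nonneg (hpos i)]
  have : b ^ 2 ≤ (∑ i, θ i * |x i - x c|) ^ 2 := by
    calc b ^ 2 = |b| ^ 2 := (sq_abs b).symm
    _ ≤ (∑ i, θ i * |x i - x c|) ^ 2 := by
        exact pow_le_pow_left₀ (abs_nonneg b) hb_le 2
  linarith
end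

section
/- (Normalization-equivariance of networks built from affine convolutions and sort pooling.) Call a map g : ℝᵖ → ℝ^q admissible if either (i) g is linear with g(𝟙ₚ) = 𝟙_q (an affine-constrained linear map, i.e. every row of its matrix sums to one), or (ii) p = q is even and g is a pairwise sorting nonlinearity: the coordinates are partitioned into consecutive pairs and g maps each pair (u, v) to (min(u, v), max(u, v)). Then every finite composition f = g_L ∘ … ∘ g_1 of admissible maps is normalization-equivariant: f(a·y + b·𝟙) = a·f(y) + b·𝟙 for all inputs y, all a > 0 and all b ∈ ℝ. -/
/-- Composition of a chain of layers `g l : ℝ^{d l} → ℝ^{d (l+1)}`: `neuralChain d g L` is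
`g (L-1) ∘ … ∘ g 1 ∘ g 0`. -/
def neuralChain (d : ℕ → ℕ) (g : ∀ l : ℕ, (Fin (d l) → ℝ) → (Fin (d (l + 1)) → ℝ)) :
    (L : ℕ) → (Fin (d 0) → ℝ) → (Fin (d L) → ℝ)
  | 0 => id
  | L + 1 => fun y => g L (neuralChain d g L y)

/-- **Normalization-equivariance of networks built from affine convolutions and sort
pooling.** Any finite composition of admissible layers — affine-constrained linear maps
(linear maps sending the all-ones vector to the all-ones vector) and pairwise sorting
nonlinearities (mapping each consecutive pair of coordinates `(u, v)` to
`(min u v, max u v)`) — is normalization-equivariant: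
`f(a·y + b·𝟙) = a·f(y) + b·𝟙` for all `y`, all `a > 0` and all `b`. -/
theorem affine_conv_sort_pool_normalization_equivariant
    (d : ℕ → ℕ) (g : ∀ l : ℕ, (Fin (d l) → ℝ) → (Fin (d (l + 1)) → ℝ))
    (hg : ∀ l,
      (IsLinearMap ℝ (g l) ∧ g l (fun _ => 1) = fun _ => 1) ∨
      ∃ (m : ℕ) (hm : d l = 2 * m) (h : d (l + 1) = d l),
        ∀ (z : Fin (d l) → ℝ) (j : ℕ) (hj : j < m),
          g l z (Fin.cast h.symm ⟨2 * j, by omega⟩)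
              = min (z ⟨2 * j, by omega⟩) (z ⟨2 * j + 1, by omega⟩) ∧
          g l z (Fin.cast h.symm ⟨2 * j + 1, by omega⟩)
              = max (z ⟨2 * j, by omega⟩) (z ⟨2 * j + 1, by omega⟩)) :
    ∀ (L : ℕ) (y : Fin (d 0) → ℝ) (a b : ℝ), 0 < a →
      neuralChain d g L (fun i => a * y i + b)
        = fun i => a * neuralChain d g L y i + b := by
  intro L y a b ha
  induction L with
  | zero => rfl
  | succ L ih =>
    show g L (neuralChain d g L (fun i => a * y i + b))
        = fun i => a * g L (neuralChain d g L y) i + b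
    rw [ih]
    -- it suffices to prove the one-layer property
    set z := neuralChain d g L y with hz
    rcases hg L with ⟨hlin, hone⟩ | ⟨m, hm, h, hsort⟩
    · have : (fun i => a * z i + b) = a • z + b • (fun _ : Fin (d L) => (1 : ℝ)) := by
        funext i; simp [Pi.smul_apply, smul_eq_mul]
      rw [this, hlin.map_add, hlin.map_smul, hlin.map_smul, hone]
      funext i
      simp only [Pi.add_apply, Pi.smul_apply, smul_eq_mul, mul_one]
    · funext i
      have hi : (i : ℕ) < 2 * m := by
        have := i.isLt; omega
      set j := (i : ℕ) / 2 with hj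
      have hjm : j < m := by omega
      have hmin : ∀ u v : ℝ, min (a * u + b) (a * v + b) = a * min u v + b := by
        intro u v
        rcases le_total u v with huv | huv
        · rw [min_eq_left, min_eq_left huv]
          nlinarith
        · rw [min_eq_right, min_eq_right huv]
          nlinarith
      have hmax : ∀ u v : ℝ, max (a * u + b) (a * v + b) = a * max u v + b := by
        intro u v
        rcases le_total u v with huv | huv
        · rw [max_eq_right, max_eq_right huv]
          nlinarith
        · rw [max_eq_left, max_eq_left huv]
          nlinarith
      rcases Nat.even_or_odd (i : ℕ) with he | ho
      · have hiv : (i : ℕ) = 2 * j := by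
          obtain ⟨k, hk⟩ := he; omega
        have hieq : i = Fin.cast h.symm ⟨2 * j, by omega⟩ := by
          apply Fin.ext; simpa using hiv
        rw [hieq, (hsort (fun i => a * z i + b) j hjm).1, (hsort z j hjm).1]
        exact hmin _ _
      · have hiv : (i : ℕ) = 2 * j + 1 := by
          obtain ⟨k, hk⟩ := ho; omega
        have hieq : i = Fin.cast h.symm ⟨2 * j + 1, by omega⟩ := by
          apply Fin.ext; simpa using hiv
        rw [hieq, (hsort (fun i => a * z i + b) j hjm).2, (hsort z j hjm).2]
        exact hmax _ _
end
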